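/- arXiv:2410.03353 — 4 statements merged into one kernel-verified Lean document; each statement's English description precedes it below -/
import Mathlib

section
/- Let ε > 0 and let (f, g) be a pair of ε-potentials. Then for every x ∈ Ω₀: (λ/(2Λ)) · max_{y ∈ Ω₁} ξ(x, y) ≤ ξ(x, f'(x)) = max_{x' ∈ Ω₀} ξ(x', f'(x)) ≤ max_{y ∈ Ω₁} ξ(x, y). -/
open MeasureTheory Set
open scoped Classical ENNReal

noncomputable section

/-- `μ` is a probability measure supported on `[a,b]` with continuous density `u`
bounded below by `lam` and above by `Lam` on `[a,b]`. -/
def IsGoodMarginal (μ : Measure ℝ) (u : ℝ → ℝ) (a b lam Lam : ℝ) : Prop :=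
  IsProbabilityMeasure μ ∧
  μ = (volume.restrict (Icc a b)).withDensity (fun x => ENNReal.ofReal (u x)) ∧
  ContinuousOn u (Icc a b) ∧
  ∀ x ∈ Icc a b, lam ≤ u x ∧ u x ≤ Lam

/-- `(f,g)` is a pair of `ε`-potentials for the quadratically regularized OT problem. -/
def IsPotentialPair (μ₀ μ₁ : Measure ℝ) (a₀ b₀ a₁ b₁ ε : ℝ) (f g : ℝ → ℝ) : Prop :=
  (∃ K, LipschitzOnWith K f (Icc a₀ b₀)) ∧
  (∃ K, LipschitzOnWith K g (Icc a₁ b₁)) ∧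
  (∀ x ∈ Icc a₀ b₀, ∫ y in Icc a₁ b₁, max (x * y - f x - g y) 0 ∂μ₁ = ε) ∧
  (∀ y ∈ Icc a₁ b₁, ∫ x in Icc a₀ b₀, max (x * y - f x - g y) 0 ∂μ₀ = ε)

/-- the `x`-section `S_x` of the support of the optimal coupling. -/
def secX (f g : ℝ → ℝ) (a₁ b₁ x : ℝ) : Set ℝ :=
  {y ∈ Icc a₁ b₁ | 0 ≤ x * y - f x - g y}

/-- the `y`-section `S^y` of the support of the optimal coupling. -/
def secY (f g : ℝ → ℝ) (a₀ b₀ y : ℝ) : Set ℝ :=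
  {x ∈ Icc a₀ b₀ | 0 ≤ x * y - f x - g y}

/-- `T_ε(x) = (∫_{S_x} y dμ₁)/μ₁(S_x)`, the derivative `f'` of the potential `f`. -/
def Tmap (μ₁ : Measure ℝ) (f g : ℝ → ℝ) (a₁ b₁ x : ℝ) : ℝ :=
  (∫ y in secX f g a₁ b₁ x, y ∂μ₁) / (μ₁ (secX f g a₁ b₁ x)).toReal

/-- the symmetric quantity, the derivative `g'` of the potential `g`. -/
def Gmap (μ₀ : Measure ℝ) (f g : ℝ → ℝ) (a₀ b₀ y : ℝ) : ℝ :=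
  (∫ x in secY f g a₀ b₀ y, x ∂μ₀) / (μ₀ (secY f g a₀ b₀ y)).toReal

/-- left endpoint `y_m(x)` of `S_x`. -/
def ymF (f g : ℝ → ℝ) (a₁ b₁ x : ℝ) : ℝ := sInf (secX f g a₁ b₁ x)

/-- right endpoint `y_M(x)` of `S_x`. -/
def yMF (f g : ℝ → ℝ) (a₁ b₁ x : ℝ) : ℝ := sSup (secX f g a₁ b₁ x)

/-- left endpoint `x_m(y)` of `S^y`. -/
def xmF (f g : ℝ → ℝ) (a₀ b₀ y : ℝ) : ℝ := sInf (secY f g a₀ b₀ y)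

/-- right endpoint `x_M(y)` of `S^y`. -/
def xMF (f g : ℝ → ℝ) (a₀ b₀ y : ℝ) : ℝ := sSup (secY f g a₀ b₀ y)

/-- `T₀` is the (nondecreasing) Monge map from `μ₀` to `μ₁`. -/
def IsMongeMap (μ₀ μ₁ : Measure ℝ) (T₀ : ℝ → ℝ) : Prop :=
  Monotone T₀ ∧ Measure.map T₀ μ₀ = μ₁

/-- convex conjugate relative to `[a,b]`. -/
def conjOn (f : ℝ → ℝ) (a b y : ℝ) : ℝ := sSup ((fun x => x * y - f x) '' Icc a b)


lemma secX_subset (f g : ℝ → ℝ) (a₁ b₁ x : ℝ) : secX f g a₁ b₁ x ⊆ Icc a₁ b₁ :=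
  fun _ hy => hy.1

lemma contOn_xi {g : ℝ → ℝ} {a₁ b₁ : ℝ} (hg : ContinuousOn g (Icc a₁ b₁)) (x c : ℝ) :
    ContinuousOn (fun y => x * y - c - g y) (Icc a₁ b₁) :=
  (((continuous_const.mul continuous_id).continuousOn.sub continuousOn_const).sub hg)

lemma isClosed_secX {f g : ℝ → ℝ} {a₁ b₁ : ℝ} (hg : ContinuousOn g (Icc a₁ b₁)) (x : ℝ) :
    IsClosed (secX f g a₁ b₁ x) := by
  have : secX f g a₁ b₁ x =
      Icc a₁ b₁ ∩ (fun y => x * y - f x - g y) ⁻¹' (Ici 0) := by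
    ext y; simp [secX, Set.mem_setOf_eq, and_comm]
  rw [this]
  exact (contOn_xi hg x (f x)).preimage_isClosed_of_isClosed isClosed_Icc isClosed_Ici

lemma key_lemma
    (a₀ b₀ a₁ b₁ ε : ℝ) (hε : 0 < ε) (μ₁ : Measure ℝ)
    [IsFiniteMeasure μ₁]
    (f g : ℝ → ℝ) (hg : ContinuousOn g (Icc a₁ b₁))
    (hpot : ∀ x ∈ Icc a₀ b₀, ∫ y in Icc a₁ b₁, max (x * y - f x - g y) 0 ∂μ₁ = ε)
    (x : ℝ) (hx : x ∈ Icc a₀ b₀) :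
    μ₁ (secX f g a₁ b₁ x) ≠ 0 ∧
    Tmap μ₁ f g a₁ b₁ x ∈ Icc a₁ b₁ ∧
    (∀ x' ∈ Icc a₀ b₀, Tmap μ₁ f g a₁ b₁ x * (x' - x) ≤ f x' - f x) ∧
    ∫ y in secX f g a₁ b₁ x, (x * y - f x - g y) ∂μ₁ = ε := by
  set S := secX f g a₁ b₁ x with hSdef
  have hSsub : S ⊆ Icc a₁ b₁ := secX_subset f g a₁ b₁ x
  have hSm : MeasurableSet S := (isClosed_secX hg x).measurableSet
  have hcont : ContinuousOn (fun y => x * y - f x - g y) (Icc a₁ b₁) := contOn_xi hg x (f x)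
  have hint1 : IntegrableOn (fun y => x * y - f x - g y) (Icc a₁ b₁) μ₁ :=
    hcont.integrableOn_compact isCompact_Icc
  have hintS : IntegrableOn (fun y => x * y - f x - g y) S μ₁ := hint1.mono_set hSsub
  have hid1 : IntegrableOn (fun y => y) (Icc a₁ b₁) μ₁ :=
    continuousOn_id.integrableOn_compact isCompact_Icc
  have hidS : IntegrableOn (fun y => y) S μ₁ := hid1.mono_set hSsub
  have hcS : ∀ c : ℝ, IntegrableOn (fun _ => c) S μ₁ := fun c =>
    integrableOn_const (measure_ne_top μ₁ S)
  -- ε = ∫_S ξ dμ₁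
  have hε' : ∫ y in S, (x * y - f x - g y) ∂μ₁ = ε := by
    rw [← hpot x hx]
    have hEqOn : EqOn (fun y => S.indicator (fun y => x * y - f x - g y) y)
        (fun y => max (x * y - f x - g y) 0) (Icc a₁ b₁) := by
      intro y hy
      by_cases hyS : y ∈ S
      · simp [indicator_of_mem hyS, max_eq_left hyS.2]
      · have hneg : ¬ (0 ≤ x * y - f x - g y) := fun hc => hyS ⟨hy, hc⟩
        simp [indicator_of_notMem hyS, max_eq_right (le_of_not_ge hneg)]
    calc ∫ y in S, (x * y - f x - g y) ∂μ₁
        = ∫ y in Icc a₁ b₁, S.indicator (fun y => x * y - f x - g y) y ∂μ₁ := by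
          rw [setIntegral_indicator hSm, inter_eq_self_of_subset_right hSsub]
      _ = ∫ y in Icc a₁ b₁, max (x * y - f x - g y) 0 ∂μ₁ :=
          setIntegral_congr_fun measurableSet_Icc hEqOn
  have hSne : μ₁ S ≠ 0 := by
    intro h0
    have hz : μ₁.restrict S = 0 := Measure.restrict_eq_zero.mpr h0
    rw [hz, integral_zero_measure] at hε'
    linarith
  have hm : 0 < (μ₁ S).toReal := ENNReal.toReal_pos hSne (measure_ne_top μ₁ S)
  -- bounds for the average
  have hI_lb : a₁ * (μ₁ S).toReal ≤ ∫ y in S, y ∂μ₁ := by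
    have h1 : ∫ y in S, (a₁ : ℝ) ∂μ₁ ≤ ∫ y in S, y ∂μ₁ :=
      setIntegral_mono_on (hcS a₁) hidS hSm (fun y hy => (hSsub hy).1)
    rwa [setIntegral_const, smul_eq_mul, mul_comm] at h1
  have hI_ub : (∫ y in S, y ∂μ₁) ≤ b₁ * (μ₁ S).toReal := by
    have h1 : ∫ y in S, y ∂μ₁ ≤ ∫ y in S, (b₁ : ℝ) ∂μ₁ :=
      setIntegral_mono_on hidS (hcS b₁) hSm (fun y hy => (hSsub hy).2)
    rwa [setIntegral_const, smul_eq_mul, mul_comm] at h1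
  have hT : Tmap μ₁ f g a₁ b₁ x ∈ Icc a₁ b₁ := by
    rw [Tmap]
    constructor
    · rw [le_div_iff₀ hm]; linarith
    · rw [div_le_iff₀ hm]; linarith
  refine ⟨hSne, hT, ?_, hε'⟩
  intro x' hx'
  have hcont' : ContinuousOn (fun y => x' * y - f x' - g y) (Icc a₁ b₁) := contOn_xi hg x' (f x')
  have hmax' : IntegrableOn (fun y => max (x' * y - f x' - g y) 0) (Icc a₁ b₁) μ₁ :=
    (hcont'.sup continuousOn_const).integrableOn_compact isCompact_Icc
  have hintS' : IntegrableOn (fun y => x' * y - f x' - g y) S μ₁ :=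
    (hcont'.integrableOn_compact isCompact_Icc).mono_set hSsub
  have step1 : ∫ y in S, max (x' * y - f x' - g y) 0 ∂μ₁ ≤ ε := by
    rw [← hpot x' hx']
    exact setIntegral_mono_set hmax'
      (Filter.Eventually.of_forall (fun y => le_max_right _ _))
      (HasSubset.Subset.eventuallyLE hSsub)
  have step2 : ∫ y in S, (x' * y - f x' - g y) ∂μ₁ ≤
      ∫ y in S, max (x' * y - f x' - g y) 0 ∂μ₁ :=
    setIntegral_mono_on hintS' (hmax'.mono_set hSsub) hSm (fun y _ => le_max_left _ _)
  have step3 : ∫ y in S, (x' * y - f x' - g y) ∂μ₁ =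
      ε + (x' - x) * (∫ y in S, y ∂μ₁) - (f x' - f x) * (μ₁ S).toReal := by
    have heq : ∀ y : ℝ, x' * y - f x' - g y =
        (x * y - f x - g y) + (x' - x) * y - (f x' - f x) := by intro y; ring
    calc ∫ y in S, (x' * y - f x' - g y) ∂μ₁
        = ∫ y in S, ((x * y - f x - g y) + (x' - x) * y - (f x' - f x)) ∂μ₁ := by
          simp_rw [heq]
      _ = (∫ y in S, ((x * y - f x - g y) + (x' - x) * y) ∂μ₁)
            - ∫ y in S, (f x' - f x : ℝ) ∂μ₁ :=
          integral_sub (hintS.add (hidS.const_mul _)) (hcS _)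
      _ = (∫ y in S, (x * y - f x - g y) ∂μ₁) + (∫ y in S, (x' - x) * y ∂μ₁)
            - ∫ y in S, (f x' - f x : ℝ) ∂μ₁ := by
          rw [integral_add hintS (hidS.const_mul _)]
      _ = ε + (x' - x) * (∫ y in S, y ∂μ₁) - (f x' - f x) * (μ₁ S).toReal := by
          rw [hε', integral_const_mul, setIntegral_const, smul_eq_mul]; simp only [Measure.real]; ring
  have hkey : (x' - x) * (∫ y in S, y ∂μ₁) ≤ (f x' - f x) * (μ₁ S).toReal := by
    have := le_trans step2 step1
    rw [step3] at this; linarith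
  rw [Tmap, div_mul_eq_mul_div, div_le_iff₀ hm]
  nlinarith [hkey]

section TriSection
open intervalIntegral

lemma tri_lemma (c d e M : ℝ) (h : ℝ → ℝ) (hce : c ≤ e) (hed : e ≤ d)
    (hM : h e = M) (hM0 : 0 ≤ M) (hc0 : 0 ≤ h c) (hd0 : 0 ≤ h d)
    (hcont : ContinuousOn h (Icc c d))
    (hconc : ∀ y₁ ∈ Icc c d, ∀ y₂ ∈ Icc c d, ∀ t ∈ Icc (0:ℝ) 1,
      (1 - t) * h y₁ + t * h y₂ ≤ h ((1 - t) * y₁ + t * y₂)) :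
    M * (d - c) / 2 ≤ ∫ y in c..d, h y := by
  have hcd : c ≤ d := le_trans hce hed
  have hint : ∀ a b : ℝ, c ≤ a → a ≤ b → b ≤ d → IntervalIntegrable h volume a b := by
    intro a b hca hab hbd
    apply ContinuousOn.intervalIntegrable
    apply hcont.mono
    rw [uIcc_of_le hab]
    exact Icc_subset_Icc hca hbd
  have hsplit : ∫ y in c..d, h y = (∫ y in c..e, h y) + ∫ y in e..d, h y :=
    (integral_add_adjacent_intervals (hint c e le_rfl hce hed)
      (hint e d hce hed le_rfl)).symm
  have piece1 : M * (e - c) / 2 ≤ ∫ y in c..e, h y := by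
    rcases eq_or_lt_of_le hce with rfl | hlt
    · simp
    · have hp : 0 < e - c := by linarith
      have hpt : ∀ y ∈ Icc c e, M * ((y - c) / (e - c)) ≤ h y := by
        intro y hy
        set t : ℝ := (y - c) / (e - c) with htdef
        have ht0 : 0 ≤ t := div_nonneg (by linarith [hy.1]) hp.le
        have ht1 : t ≤ 1 := (div_le_one hp).mpr (by linarith [hy.2])
        have hyrep : y = (1 - t) * c + t * e := by
          rw [htdef]; field_simp; try ring
        have := hconc c ⟨le_rfl, hcd⟩ e ⟨hce, hed⟩ t ⟨ht0, ht1⟩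
        rw [← hyrep, hM] at this
        nlinarith
      have hmono : ∫ y in c..e, M * ((y - c) / (e - c)) ≤ ∫ y in c..e, h y := by
        apply integral_mono_on hce ?_ (hint c e le_rfl hce hed) hpt
        apply ContinuousOn.intervalIntegrable
        fun_prop
      have hcomp : ∫ y in c..e, M * ((y - c) / (e - c)) = M * (e - c) / 2 := by
        have : ∀ y : ℝ, M * ((y - c) / (e - c)) = (M / (e - c)) * (y - c) := by
          intro y; field_simp; try ring
        simp_rw [this]
        rw [intervalIntegral.integral_const_mul]
        have : ∫ y in c..e, (y - c) = (e ^ 2 - c ^ 2) / 2 - (e - c) * c := by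
          rw [intervalIntegral.integral_sub intervalIntegrable_id
            (intervalIntegrable_const), integral_id, intervalIntegral.integral_const, smul_eq_mul]
        rw [this]
        field_simp
        ring
      linarith [hmono, hcomp.symm.le]
  have piece2 : M * (d - e) / 2 ≤ ∫ y in e..d, h y := by
    rcases eq_or_lt_of_le hed with rfl | hlt
    · simp
    · have hp : 0 < d - e := by linarith
      have hpt : ∀ y ∈ Icc e d, M * ((d - y) / (d - e)) ≤ h y := by
        intro y hy
        set t : ℝ := (y - e) / (d - e) with htdef
        have ht0 : 0 ≤ t := div_nonneg (by linarith [hy.1]) hp.le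
        have ht1 : t ≤ 1 := (div_le_one hp).mpr (by linarith [hy.2])
        have hyrep : y = (1 - t) * e + t * d := by
          rw [htdef]; field_simp; try ring
        have := hconc e ⟨hce, hed⟩ d ⟨hcd, le_rfl⟩ t ⟨ht0, ht1⟩
        rw [← hyrep, hM] at this
        have htd : (d - y) / (d - e) = 1 - t := by
          rw [htdef]; field_simp; try ring
        rw [htd]
        nlinarith
      have hmono : ∫ y in e..d, M * ((d - y) / (d - e)) ≤ ∫ y in e..d, h y := by
        apply integral_mono_on hed ?_ (hint e d hce hed le_rfl) hpt
        apply ContinuousOn.intervalIntegrable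
        fun_prop
      have hcomp : ∫ y in e..d, M * ((d - y) / (d - e)) = M * (d - e) / 2 := by
        have : ∀ y : ℝ, M * ((d - y) / (d - e)) = (-(M / (d - e))) * (y - d) := by
          intro y; field_simp; try ring
        simp_rw [this]
        rw [intervalIntegral.integral_const_mul]
        have : ∫ y in e..d, (y - d) = (d ^ 2 - e ^ 2) / 2 - (d - e) * d := by
          rw [intervalIntegral.integral_sub intervalIntegrable_id
            (intervalIntegrable_const), integral_id, intervalIntegral.integral_const, smul_eq_mul]
        rw [this]
        field_simp
        ring
      linarith [hmono, hcomp.symm.le]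
  rw [hsplit]; linarith

end TriSection

lemma max_int (μ : Measure ℝ) (f g : ℝ → ℝ) (a₁ b₁ x : ℝ)
    (hSm : MeasurableSet (secX f g a₁ b₁ x)) :
    ∫ y in Icc a₁ b₁, max (x * y - f x - g y) 0 ∂μ =
      ∫ y in secX f g a₁ b₁ x, (x * y - f x - g y) ∂μ := by
  have hSsub := secX_subset f g a₁ b₁ x
  have hEqOn : EqOn (fun y => (secX f g a₁ b₁ x).indicator (fun y => x * y - f x - g y) y)
      (fun y => max (x * y - f x - g y) 0) (Icc a₁ b₁) := by
    intro y hy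
    by_cases hyS : y ∈ secX f g a₁ b₁ x
    · simp [indicator_of_mem hyS, max_eq_left hyS.2]
    · have hneg : ¬ (0 ≤ x * y - f x - g y) := fun hc => hyS ⟨hy, hc⟩
      simp [indicator_of_notMem hyS, max_eq_right (le_of_not_ge hneg)]
  calc ∫ y in Icc a₁ b₁, max (x * y - f x - g y) 0 ∂μ
      = ∫ y in Icc a₁ b₁, (secX f g a₁ b₁ x).indicator (fun y => x * y - f x - g y) y ∂μ :=
        (setIntegral_congr_fun measurableSet_Icc hEqOn).symm
    _ = ∫ y in secX f g a₁ b₁ x, (x * y - f x - g y) ∂μ := by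
        rw [setIntegral_indicator hSm, inter_eq_self_of_subset_right hSsub]


set_option maxHeartbeats 1000000 in
theorem stmt6_aux
    (a₀ b₀ a₁ b₁ lam Lam : ℝ) (μ₀ μ₁ : Measure ℝ) (u₀ u₁ : ℝ → ℝ)
    (hab₀ : a₀ < b₀) (hab₁ : a₁ < b₁) (hlam : 0 < lam)
    (hμ₀ : IsProbabilityMeasure μ₀ ∧
      μ₀ = (volume.restrict (Icc a₀ b₀)).withDensity (fun x => ENNReal.ofReal (u₀ x)) ∧
      ContinuousOn u₀ (Icc a₀ b₀) ∧ ∀ x ∈ Icc a₀ b₀, lam ≤ u₀ x ∧ u₀ x ≤ Lam)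
    (hμ₁ : IsProbabilityMeasure μ₁ ∧
      μ₁ = (volume.restrict (Icc a₁ b₁)).withDensity (fun x => ENNReal.ofReal (u₁ x)) ∧
      ContinuousOn u₁ (Icc a₁ b₁) ∧ ∀ x ∈ Icc a₁ b₁, lam ≤ u₁ x ∧ u₁ x ≤ Lam)
    (ε : ℝ) (hε : 0 < ε) (f g : ℝ → ℝ)
    (hfg : (∃ K, LipschitzOnWith K f (Icc a₀ b₀)) ∧
      (∃ K, LipschitzOnWith K g (Icc a₁ b₁)) ∧
      (∀ x ∈ Icc a₀ b₀, ∫ y in Icc a₁ b₁, max (x * y - f x - g y) 0 ∂μ₁ = ε) ∧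
      (∀ y ∈ Icc a₁ b₁, ∫ x in Icc a₀ b₀, max (x * y - f x - g y) 0 ∂μ₀ = ε)) :
    ∀ x ∈ Icc a₀ b₀,
      lam / (2 * Lam) * sSup ((fun y => x * y - f x - g y) '' Icc a₁ b₁) ≤
        x * Tmap μ₁ f g a₁ b₁ x - f x - g (Tmap μ₁ f g a₁ b₁ x) ∧
      x * Tmap μ₁ f g a₁ b₁ x - f x - g (Tmap μ₁ f g a₁ b₁ x) =
        sSup ((fun x' => x' * Tmap μ₁ f g a₁ b₁ x - f x' - g (Tmap μ₁ f g a₁ b₁ x)) ''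
          Icc a₀ b₀) ∧
      x * Tmap μ₁ f g a₁ b₁ x - f x - g (Tmap μ₁ f g a₁ b₁ x) ≤
        sSup ((fun y => x * y - f x - g y) '' Icc a₁ b₁) := by
  obtain ⟨⟨K₀, hKf⟩, ⟨K₁, hKg⟩, hpot₁, hpot₀⟩ := hfg
  obtain ⟨hprob₀, hden₀, hu₀c, hu₀b⟩ := hμ₀
  obtain ⟨hprob₁, hden₁, hu₁c, hu₁b⟩ := hμ₁
  haveI := hprob₀; haveI := hprob₁
  have hf_cont : ContinuousOn f (Icc a₀ b₀) := hKf.continuousOn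
  have hg_cont : ContinuousOn g (Icc a₁ b₁) := hKg.continuousOn
  have hΛ : 0 < Lam := lt_of_lt_of_le hlam
    (le_trans (hu₁b a₁ (left_mem_Icc.mpr hab₁.le)).1 (hu₁b a₁ (left_mem_Icc.mpr hab₁.le)).2)
  have hpot₀' : ∀ y ∈ Icc a₁ b₁, ∫ x' in Icc a₀ b₀, max (y * x' - g y - f x') 0 ∂μ₀ = ε := by
    intro y hy
    rw [← hpot₀ y hy]
    have : ∀ x' : ℝ, y * x' - g y - f x' = x' * y - f x' - g y := fun x' => by ring
    simp_rw [this]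
  intro x hx
  obtain ⟨hSne, hTIcc, hfsl, hεS⟩ :=
    key_lemma a₀ b₀ a₁ b₁ ε hε μ₁ f g hg_cont hpot₁ x hx
  have hgsl : ∀ y ∈ Icc a₁ b₁, ∃ s : ℝ, ∀ y' ∈ Icc a₁ b₁, s * (y' - y) ≤ g y' - g y := by
    intro y hy
    obtain ⟨_, _, hsl, _⟩ := key_lemma a₁ b₁ a₀ b₀ ε hε μ₀ g f hf_cont hpot₀' y hy
    exact ⟨Tmap μ₀ g f a₀ b₀ y, hsl⟩
  set S := secX f g a₁ b₁ x with hSdef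
  set T := Tmap μ₁ f g a₁ b₁ x with hTdef
  set m := (μ₁ S).toReal with hmdef
  have hSsub : S ⊆ Icc a₁ b₁ := secX_subset f g a₁ b₁ x
  have hScl : IsClosed S := isClosed_secX hg_cont x
  have hSm : MeasurableSet S := hScl.measurableSet
  have hm : 0 < m := ENNReal.toReal_pos hSne (measure_ne_top _ _)
  have hSne' : S.Nonempty := nonempty_of_measure_ne_zero hSne
  have hconth : ContinuousOn (fun y => x * y - f x - g y) (Icc a₁ b₁) := contOn_xi hg_cont x (f x)
  -- the maximizer e and M
  obtain ⟨e, heIcc, hemax'⟩ :=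
    isCompact_Icc.exists_isMaxOn (nonempty_Icc.mpr hab₁.le) hconth
  have hemax : ∀ y ∈ Icc a₁ b₁, x * y - f x - g y ≤ x * e - f x - g e := fun y hy => hemax' hy
  have hMdef : sSup ((fun y => x * y - f x - g y) '' Icc a₁ b₁) = x * e - f x - g e := by
    apply IsGreatest.csSup_eq
    exact ⟨⟨e, heIcc, rfl⟩, by rintro _ ⟨y, hy, rfl⟩; exact hemax y hy⟩
  have hM0 : 0 ≤ x * e - f x - g e := by
    obtain ⟨y₀, hy₀⟩ := hSne'
    exact le_trans hy₀.2 (hemax y₀ (hSsub hy₀))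
  have heS : e ∈ S := ⟨heIcc, hM0⟩
  -- part 2
  have hub : ∀ x' ∈ Icc a₀ b₀, x' * T - f x' - g T ≤ x * T - f x - g T := by
    intro x' hx'
    have h1 := hfsl x' hx'
    rw [mul_sub, mul_comm T x', mul_comm T x] at h1
    linarith
  have hgoal2 : x * T - f x - g T =
      sSup ((fun x' => x' * T - f x' - g T) '' Icc a₀ b₀) := by
    apply le_antisymm
    · apply le_csSup
      · exact ⟨x * T - f x - g T, by rintro _ ⟨x', hx', rfl⟩; exact hub x' hx'⟩
      · exact ⟨x, hx, rfl⟩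
    · exact csSup_le ⟨_, ⟨x, hx, rfl⟩⟩ (by rintro _ ⟨x', hx', rfl⟩; exact hub x' hx')
  -- part 3
  have hgoal3 : x * T - f x - g T ≤ sSup ((fun y => x * y - f x - g y) '' Icc a₁ b₁) := by
    rw [hMdef]; exact hemax T hTIcc
  -- concavity of ξ(x,·)
  have hconc : ∀ y₁ ∈ Icc a₁ b₁, ∀ y₂ ∈ Icc a₁ b₁, ∀ t ∈ Icc (0:ℝ) 1,
      (1 - t) * (x * y₁ - f x - g y₁) + t * (x * y₂ - f x - g y₂) ≤
        x * ((1 - t) * y₁ + t * y₂) - f x - g ((1 - t) * y₁ + t * y₂) := by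
    intro y₁ hy₁ y₂ hy₂ t ht
    have hyIcc : (1 - t) * y₁ + t * y₂ ∈ Icc a₁ b₁ := by
      constructor
      · nlinarith [hy₁.1, hy₂.1, ht.1, ht.2]
      · nlinarith [hy₁.2, hy₂.2, ht.1, ht.2]
    obtain ⟨s, hs⟩ := hgsl ((1 - t) * y₁ + t * y₂) hyIcc
    have h1 := hs y₁ hy₁
    have h2 := hs y₂ hy₂
    nlinarith [mul_le_mul_of_nonneg_left h1 (by linarith [ht.2] : (0:ℝ) ≤ 1 - t),
      mul_le_mul_of_nonneg_left h2 ht.1]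
  -- S is the interval [c, d]
  set c := sInf S with hcdef
  set d := sSup S with hddef
  have hSbb : BddBelow S := ⟨a₁, fun y hy => (hSsub hy).1⟩
  have hSba : BddAbove S := ⟨b₁, fun y hy => (hSsub hy).2⟩
  have hcS : c ∈ S := hScl.csInf_mem hSne' hSbb
  have hdS : d ∈ S := hScl.csSup_mem hSne' hSba
  have hcd : c ≤ d := csInf_le_csSup hSne' hSbb hSba
  have hcdIcc : Icc c d ⊆ Icc a₁ b₁ := Icc_subset_Icc (hSsub hcS).1 (hSsub hdS).2
  have hSicc : S = Icc c d := by
    apply Subset.antisymm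
    · exact fun y hy => ⟨csInf_le hSbb hy, le_csSup hSba hy⟩
    · intro y hy
      rcases eq_or_lt_of_le hcd with heq | hlt
      · have : y = c := le_antisymm (heq ▸ hy.2) hy.1
        rwa [this]
      · have hp : 0 < d - c := by linarith
        set t : ℝ := (y - c) / (d - c) with htdef
        have ht0 : 0 ≤ t := div_nonneg (by linarith [hy.1]) hp.le
        have ht1 : t ≤ 1 := (div_le_one hp).mpr (by linarith [hy.2])
        have hyrep : y = (1 - t) * c + t * d := by rw [htdef]; field_simp; ring
        have hcc := hconc c (hSsub hcS) d (hSsub hdS) t ⟨ht0, ht1⟩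
        rw [← hyrep] at hcc
        refine ⟨hcdIcc hy, ?_⟩
        nlinarith [hcS.2, hdS.2]
  have hecd : e ∈ Icc c d := hSicc ▸ heS
  -- volume of S
  have hvolS : volume S = ENNReal.ofReal (d - c) := by
    rw [hSicc, Real.volume_Icc]
  -- m ≤ Lam * (d - c)
  have hmLe : m ≤ Lam * (d - c) := by
    have h1 : μ₁ S ≤ ENNReal.ofReal Lam * volume S := by
      rw [hden₁, withDensity_apply _ hSm, Measure.restrict_restrict hSm,
        inter_eq_self_of_subset_left hSsub]
      calc ∫⁻ y in S, ENNReal.ofReal (u₁ y) ∂volume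
          ≤ ∫⁻ y in S, ENNReal.ofReal Lam ∂volume :=
            setLIntegral_mono' hSm (fun y hy =>
              ENNReal.ofReal_le_ofReal (hu₁b y (hSsub hy)).2)
        _ = ENNReal.ofReal Lam * volume S := by rw [setLIntegral_const]
    have h2 : (ENNReal.ofReal Lam * volume S).toReal = Lam * (d - c) := by
      rw [hvolS, ← ENNReal.ofReal_mul hΛ.le, ENNReal.toReal_ofReal]
      exact mul_nonneg hΛ.le (by linarith)
    have hfin : ENNReal.ofReal Lam * volume S ≠ ⊤ := by
      rw [hvolS]; exact ENNReal.mul_ne_top ENNReal.ofReal_ne_top ENNReal.ofReal_ne_top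
    calc m ≤ (ENNReal.ofReal Lam * volume S).toReal := ENNReal.toReal_mono hfin h1
      _ = Lam * (d - c) := h2
  -- integrability wrt μ₁ on S
  have hintS : IntegrableOn (fun y => x * y - f x - g y) S μ₁ :=
    (hconth.integrableOn_compact isCompact_Icc).mono_set hSsub
  have hidS : IntegrableOn (fun y => y) S μ₁ :=
    (continuousOn_id.integrableOn_compact isCompact_Icc).mono_set hSsub
  have hcS' : ∀ r : ℝ, IntegrableOn (fun _ => r) S μ₁ := fun r =>
    integrableOn_const (measure_ne_top μ₁ S)
  -- Jensen step : ε ≤ ξ(x,T) * m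
  have hTm : T * m = ∫ y in S, y ∂μ₁ := by
    rw [hTdef, hmdef]
    simp only [Tmap]
    rw [← hSdef]
    exact div_mul_cancel₀ _ hm.ne'
  have hJ : ε ≤ (x * T - f x - g T) * m := by
    obtain ⟨s, hs⟩ := hgsl T hTIcc
    have hpt : ∀ y ∈ S, x * y - f x - g y ≤ (x * T - f x - g T) + (x - s) * (y - T) := by
      intro y hy
      nlinarith [hs y (hSsub hy)]
    have hsubT : IntegrableOn (fun y => y - T) S μ₁ := hidS.sub (hcS' T)
    have hint2 : IntegrableOn (fun y => (x - s) * (y - T)) S μ₁ := hsubT.const_mul _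
    have hrhs : IntegrableOn (fun y => (x * T - f x - g T) + (x - s) * (y - T)) S μ₁ :=
      (hcS' _).add hint2
    have hle : ∫ y in S, (x * y - f x - g y) ∂μ₁ ≤
        ∫ y in S, ((x * T - f x - g T) + (x - s) * (y - T)) ∂μ₁ :=
      setIntegral_mono_on hintS hrhs hSm hpt
    have hcomp : ∫ y in S, ((x * T - f x - g T) + (x - s) * (y - T)) ∂μ₁
        = (x * T - f x - g T) * m := by
      rw [integral_add (hcS' _) hint2,
        setIntegral_const, integral_const_mul, integral_sub hidS (hcS' T),
        setIntegral_const, ← hTm]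
      simp only [smul_eq_mul, Measure.real, ← hmdef]
      ring
    rw [hεS, hcomp] at hle
    exact hle
  -- lower bound for ε via the density lower bound and concavity
  have hεlb : lam * ((x * e - f x - g e) * (d - c) / 2) ≤ ε := by
    have hmeas : AEMeasurable (fun y => (u₁ y).toNNReal)
        ((volume.restrict (Icc a₁ b₁)).restrict (Icc a₁ b₁)) := by
      rw [Measure.restrict_restrict measurableSet_Icc, inter_self]
      exact measurable_real_toNNReal.comp_aemeasurable
        (hu₁c.aemeasurable measurableSet_Icc)
    have hstep1 : ∫ y in Icc a₁ b₁, max (x * y - f x - g y) 0 ∂μ₁ =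
        ∫ y in Icc a₁ b₁, u₁ y * max (x * y - f x - g y) 0 ∂volume := by
      have hrepr : μ₁ = (volume.restrict (Icc a₁ b₁)).withDensity
          (fun y => ((u₁ y).toNNReal : ℝ≥0∞)) := hden₁
      rw [hrepr, setIntegral_withDensity_eq_setIntegral_smul₀ hmeas _ measurableSet_Icc,
        Measure.restrict_restrict measurableSet_Icc, inter_self]
      apply setIntegral_congr_fun measurableSet_Icc
      intro y hy
      have h0 : 0 ≤ u₁ y := le_trans hlam.le (hu₁b y hy).1
      simp [NNReal.smul_def, Real.coe_toNNReal _ h0]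
    have hstep2 : lam * ∫ y in Icc a₁ b₁, max (x * y - f x - g y) 0 ∂volume ≤
        ∫ y in Icc a₁ b₁, u₁ y * max (x * y - f x - g y) 0 ∂volume := by
      rw [← integral_const_mul]
      apply setIntegral_mono_on
      · exact (continuousOn_const.mul (hconth.sup continuousOn_const)).integrableOn_compact
          isCompact_Icc
      · exact (hu₁c.mul (hconth.sup continuousOn_const)).integrableOn_compact isCompact_Icc
      · exact measurableSet_Icc
      · intro y hy
        exact mul_le_mul_of_nonneg_right (hu₁b y hy).1 (le_max_right _ _)
    have hstep3 : ∫ y in Icc a₁ b₁, max (x * y - f x - g y) 0 ∂(volume : Measure ℝ) =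
        ∫ y in S, (x * y - f x - g y) ∂volume := max_int volume f g a₁ b₁ x hSm
    have hstep4 : (x * e - f x - g e) * (d - c) / 2 ≤
        ∫ y in S, (x * y - f x - g y) ∂volume := by
      rw [hSicc, integral_Icc_eq_integral_Ioc, ← intervalIntegral.integral_of_le hcd]
      exact tri_lemma c d e _ _ hecd.1 hecd.2 rfl hM0 hcS.2 hdS.2 (hconth.mono hcdIcc)
        (fun y₁ h1 y₂ h2 t ht => hconc y₁ (hcdIcc h1) y₂ (hcdIcc h2) t ht)
    have h5 : lam * ((x * e - f x - g e) * (d - c) / 2) ≤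
        lam * ∫ y in S, (x * y - f x - g y) ∂volume :=
      mul_le_mul_of_nonneg_left hstep4 hlam.le
    have hεeq := hpot₁ x hx
    rw [← hstep3] at h5
    linarith [h5, hstep2, hstep1, hεeq]
  -- conclusion
  refine ⟨?_, hgoal2, hgoal3⟩
  rw [hMdef]
  have hT0 : 0 ≤ x * T - f x - g T := by
    by_contra hneg
    push_neg at hneg
    have : (x * T - f x - g T) * m < 0 := mul_neg_of_neg_of_pos hneg hm
    linarith
  have hL0 : 0 < d - c := by nlinarith [hmLe, hm]
  rw [div_mul_eq_mul_div, div_le_iff₀ (by positivity : (0:ℝ) < 2 * Lam)]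
  nlinarith [hεlb, hJ, mul_le_mul_of_nonneg_left hmLe hT0, hL0, hM0]

theorem stmt6
    (a₀ b₀ a₁ b₁ lam Lam : ℝ) (μ₀ μ₁ : Measure ℝ) (u₀ u₁ : ℝ → ℝ)
    (hab₀ : a₀ < b₀) (hab₁ : a₁ < b₁) (hlam : 0 < lam)
    (hμ₀ : IsGoodMarginal μ₀ u₀ a₀ b₀ lam Lam)
    (hμ₁ : IsGoodMarginal μ₁ u₁ a₁ b₁ lam Lam)
    (ε : ℝ) (hε : 0 < ε) (f g : ℝ → ℝ)
    (hfg : IsPotentialPair μ₀ μ₁ a₀ b₀ a₁ b₁ ε f g) :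
    ∀ x ∈ Icc a₀ b₀,
      lam / (2 * Lam) * sSup ((fun y => x * y - f x - g y) '' Icc a₁ b₁) ≤
        x * Tmap μ₁ f g a₁ b₁ x - f x - g (Tmap μ₁ f g a₁ b₁ x) ∧
      x * Tmap μ₁ f g a₁ b₁ x - f x - g (Tmap μ₁ f g a₁ b₁ x) =
        sSup ((fun x' => x' * Tmap μ₁ f g a₁ b₁ x - f x' - g (Tmap μ₁ f g a₁ b₁ x)) ''
          Icc a₀ b₀) ∧
      x * Tmap μ₁ f g a₁ b₁ x - f x - g (Tmap μ₁ f g a₁ b₁ x) ≤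
        sSup ((fun y => x * y - f x - g y) '' Icc a₁ b₁) :=
  stmt6_aux a₀ b₀ a₁ b₁ lam Lam μ₀ μ₁ u₀ u₁ hab₀ hab₁ hlam hμ₀ hμ₁ ε hε f g hfg
end
end

section
/- Let ε > 0, let (f, g) be a pair of ε-potentials, let x ∈ Ω₀, and let 0 < η < 1 be such that (1 − η) u₁(y') ≤ u₁(y) ≤ (1 + η) u₁(y') for all y, y' ∈ S_x. Writing m(x) := (y_m(x) + y_M(x))/2 for the midpoint of S_x, one has |f'(x) − m(x)| ≤ (η/2) |S_x|, and consequently f'(x) − y_m(x) ≥ ((1 − η)/2) |S_x| and y_M(x) − f'(x) ≥ ((1 − η)/2) |S_x| (while trivially f'(x) − y_m(x) ≤ |S_x| and y_M(x) − f'(x) ≤ |S_x|). -/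
open MeasureTheory Set
open scoped Classical ENNReal

noncomputable section

/-- Core strict-monotonicity/convexity argument for the potential `g`. -/
theorem aux_gcvx (μ : Measure ℝ) [IsFiniteMeasure μ] (a b ε : ℝ) (hε : 0 < ε)
    (F : ℝ → ℝ) (hF : Continuous F) (y₀ y₁ θ : ℝ) (hθ0 : 0 ≤ θ) (hθ1 : θ ≤ 1)
    (g₀ g₁ gt : ℝ)
    (h₀ : ∫ x in Icc a b, max (x * y₀ - F x - g₀) 0 ∂μ = ε)
    (h₁ : ∫ x in Icc a b, max (x * y₁ - F x - g₁) 0 ∂μ = ε)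
    (ht : ∫ x in Icc a b, max (x * (θ * y₀ + (1 - θ) * y₁) - F x - gt) 0 ∂μ = ε) :
    gt ≤ θ * g₀ + (1 - θ) * g₁ := by
  by_contra hcon
  push_neg at hcon
  set yt := θ * y₀ + (1 - θ) * y₁ with hytdef
  set c := θ * g₀ + (1 - θ) * g₁ with hcdef
  have hint : ∀ φ : ℝ → ℝ, Continuous φ → IntegrableOn φ (Icc a b) μ := fun φ hφ =>
    hφ.continuousOn.integrableOn_compact isCompact_Icc
  set sfun := fun x' : ℝ => x' * yt - F x' with hsfundef
  have hsc : Continuous sfun := (continuous_id.mul continuous_const).sub hF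
  set A := Icc a b ∩ {x' | gt < sfun x'} with hAdef
  have hAm : MeasurableSet A :=
    measurableSet_Icc.inter (measurableSet_lt measurable_const hsc.measurable)
  have hAsub : A ⊆ Icc a b := inter_subset_left
  have hsplit : ∫ x' in Icc a b, max (sfun x' - gt) 0 ∂μ
      = ∫ x' in A, max (sfun x' - gt) 0 ∂μ := by
    refine setIntegral_eq_of_subset_of_forall_diff_eq_zero measurableSet_Icc hAsub
      fun x' hx' => ?_
    have h2 : ¬ gt < sfun x' := fun h => hx'.2 ⟨hx'.1, h⟩
    have : sfun x' - gt ≤ 0 := by linarith [le_of_not_gt h2]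
    simp [max_eq_right this]
  have hEd : ∫ x' in A, max (sfun x' - gt) 0 ∂μ = ε := by rw [← hsplit]; exact ht
  have hA0 : μ A ≠ 0 := by
    intro h
    rw [Measure.restrict_eq_zero.mpr h, integral_zero_measure] at hEd
    exact hε.ne' hEd.symm
  have hApos : 0 < (μ A).toReal := ENNReal.toReal_pos hA0 (measure_ne_top μ A)
  have hεA : ∫ x' in A, (sfun x' - gt) ∂μ = ε := by
    rw [← hEd]
    refine setIntegral_congr_fun hAm fun x' hx' => ?_
    have h2 : gt < sfun x' := hx'.2
    rw [max_eq_left (by linarith)]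
  have hlow : ε + (gt - c) * (μ A).toReal
      ≤ ∫ x' in Icc a b, max (sfun x' - c) 0 ∂μ := by
    have h1 : ∫ x' in A, ((sfun x' - gt) + (gt - c)) ∂μ
        = ε + (gt - c) * (μ A).toReal := by
      rw [integral_add ((hint (fun x' => sfun x' - gt) (hsc.sub continuous_const)).mono_set hAsub)
        (integrableOn_const (measure_ne_top μ A)), hεA, setIntegral_const,
        smul_eq_mul, mul_comm]; rfl
    rw [← h1]
    have h2 : ∫ x' in A, ((sfun x' - gt) + (gt - c)) ∂μ
        ≤ ∫ x' in A, max (sfun x' - c) 0 ∂μ := by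
      refine setIntegral_mono_on
        (((hint _ (hsc.sub continuous_const)).mono_set hAsub).add
          (integrableOn_const (measure_ne_top μ A)))
        ((hint _ ((hsc.sub continuous_const).max continuous_const)).mono_set hAsub)
        hAm fun x' hx' => ?_
      have h3 : sfun x' - gt + (gt - c) = sfun x' - c := by ring
      rw [h3]; exact le_max_left _ _
    refine h2.trans (setIntegral_mono_set
      (hint _ ((hsc.sub continuous_const).max continuous_const))
      (Filter.Eventually.of_forall fun x' => le_max_right _ _)
      (HasSubset.Subset.eventuallyLE hAsub))
  have hhigh : ∫ x' in Icc a b, max (sfun x' - c) 0 ∂μ ≤ ε := by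
    have key : ∀ x' ∈ Icc a b, max (sfun x' - c) 0
        ≤ θ * max (x' * y₀ - F x' - g₀) 0 + (1 - θ) * max (x' * y₁ - F x' - g₁) 0 := by
      intro x' _
      have h0 := le_max_left (x' * y₀ - F x' - g₀) 0
      have h0' := le_max_right (x' * y₀ - F x' - g₀) 0
      have h1 := le_max_left (x' * y₁ - F x' - g₁) 0
      have h1' := le_max_right (x' * y₁ - F x' - g₁) 0
      refine max_le ?_ (by nlinarith)
      have heq : sfun x' - c = θ * (x' * y₀ - F x' - g₀) + (1 - θ) * (x' * y₁ - F x' - g₁) := by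
        simp only [hsfundef, hcdef, hytdef]; ring
      rw [heq]; nlinarith
    have hc0 : Continuous fun x' => max (x' * y₀ - F x' - g₀) 0 :=
      (((continuous_id.mul continuous_const).sub hF).sub continuous_const).max continuous_const
    have hc1 : Continuous fun x' => max (x' * y₁ - F x' - g₁) 0 :=
      (((continuous_id.mul continuous_const).sub hF).sub continuous_const).max continuous_const
    calc ∫ x' in Icc a b, max (sfun x' - c) 0 ∂μ
        ≤ ∫ x' in Icc a b, (θ * max (x' * y₀ - F x' - g₀) 0
            + (1 - θ) * max (x' * y₁ - F x' - g₁) 0) ∂μ := by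
          refine setIntegral_mono_on
            (hint _ ((hsc.sub continuous_const).max continuous_const))
            (((hint _ hc0).const_mul θ).add ((hint _ hc1).const_mul (1 - θ)))
            measurableSet_Icc key
      _ = θ * ε + (1 - θ) * ε := by
          rw [integral_add ((hint _ hc0).const_mul θ) ((hint _ hc1).const_mul (1 - θ)),
            integral_const_mul, integral_const_mul, h₀, h₁]
      _ = ε := by ring
  nlinarith

set_option maxHeartbeats 1000000 in
theorem stmt7
    (a₀ b₀ a₁ b₁ lam Lam : ℝ) (μ₀ μ₁ : Measure ℝ) (u₀ u₁ : ℝ → ℝ)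
    (hab₀ : a₀ < b₀) (hab₁ : a₁ < b₁) (hlam : 0 < lam)
    (hμ₀ : IsGoodMarginal μ₀ u₀ a₀ b₀ lam Lam)
    (hμ₁ : IsGoodMarginal μ₁ u₁ a₁ b₁ lam Lam)
    (ε : ℝ) (hε : 0 < ε) (f g : ℝ → ℝ)
    (hfg : IsPotentialPair μ₀ μ₁ a₀ b₀ a₁ b₁ ε f g)
    (x : ℝ) (hx : x ∈ Icc a₀ b₀) (η : ℝ) (hη₀ : 0 < η) (hη₁ : η < 1)
    (hratio : ∀ y ∈ secX f g a₁ b₁ x, ∀ y' ∈ secX f g a₁ b₁ x,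
      (1 - η) * u₁ y' ≤ u₁ y ∧ u₁ y ≤ (1 + η) * u₁ y') :
    |Tmap μ₁ f g a₁ b₁ x - (ymF f g a₁ b₁ x + yMF f g a₁ b₁ x) / 2| ≤
        η / 2 * (volume (secX f g a₁ b₁ x)).toReal ∧
    (1 - η) / 2 * (volume (secX f g a₁ b₁ x)).toReal ≤
        Tmap μ₁ f g a₁ b₁ x - ymF f g a₁ b₁ x ∧
    (1 - η) / 2 * (volume (secX f g a₁ b₁ x)).toReal ≤
        yMF f g a₁ b₁ x - Tmap μ₁ f g a₁ b₁ x ∧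
    Tmap μ₁ f g a₁ b₁ x - ymF f g a₁ b₁ x ≤ (volume (secX f g a₁ b₁ x)).toReal ∧
    yMF f g a₁ b₁ x - Tmap μ₁ f g a₁ b₁ x ≤ (volume (secX f g a₁ b₁ x)).toReal := by
  classical
  obtain ⟨hP₁, hμ₁d, hu₁c, hu₁b⟩ := hμ₁
  obtain ⟨hP₀, hμ₀d, hu₀c, hu₀b⟩ := hμ₀
  obtain ⟨⟨Kf, hfL⟩, ⟨Kg, hgL⟩, hE₁, hE₀⟩ := hfg
  haveI := hP₀; haveI := hP₁
  obtain ⟨F, hF, hFeq⟩ := hfL.extend_real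
  obtain ⟨G, hG, hGeq⟩ := hgL.extend_real
  set S := secX f g a₁ b₁ x with hSdef
  have hSsub : S ⊆ Icc a₁ b₁ := fun y hy => hy.1
  have hSG : S = Icc a₁ b₁ ∩ {y | 0 ≤ x * y - f x - G y} := by
    ext y
    constructor
    · rintro ⟨h1, h2⟩; exact ⟨h1, by simpa [← hGeq h1] using h2⟩
    · rintro ⟨h1, h2⟩; exact ⟨h1, by simpa [hGeq h1] using h2⟩
  have hξc : Continuous (fun y => x * y - f x - G y) :=
    ((continuous_const.mul continuous_id).sub continuous_const).sub hG.continuous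
  have hScl : IsClosed S := by
    rw [hSG]
    exact isClosed_Icc.inter (isClosed_le continuous_const hξc)
  have hSm : MeasurableSet S := hScl.measurableSet
  have hScomp : IsCompact S := isCompact_Icc.of_isClosed_subset hScl hSsub
  -- convexity of g on Icc a₁ b₁
  have hE₀' : ∀ y ∈ Icc a₁ b₁, ∫ x' in Icc a₀ b₀, max (x' * y - F x' - g y) 0 ∂μ₀ = ε := by
    intro y hy
    rw [← hE₀ y hy]
    exact setIntegral_congr_fun measurableSet_Icc fun x' hx' => by simp [← hFeq hx']
  have hgcvx : ∀ y₀ ∈ Icc a₁ b₁, ∀ y₁ ∈ Icc a₁ b₁, ∀ θ : ℝ, 0 ≤ θ → θ ≤ 1 →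
      g (θ * y₀ + (1 - θ) * y₁) ≤ θ * g y₀ + (1 - θ) * g y₁ := by
    intro y₀ hy₀ y₁ hy₁ θ hθ0 hθ1
    have hyt : θ * y₀ + (1 - θ) * y₁ ∈ Icc a₁ b₁ :=
      ⟨by nlinarith [hy₀.1, hy₁.1], by nlinarith [hy₀.2, hy₁.2]⟩
    exact aux_gcvx μ₀ a₀ b₀ ε hε F hF.continuous y₀ y₁ θ hθ0 hθ1 _ _ _
      (hE₀' y₀ hy₀) (hE₀' y₁ hy₁) (hE₀' _ hyt)
  -- convexity of S
  have hconvS : Convex ℝ S := by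
    intro p hp q hq a b ha hb hab
    have hmem : a • p + b • q ∈ Icc a₁ b₁ := (convex_Icc a₁ b₁) hp.1 hq.1 ha hb hab
    have hb' : b = 1 - a := by linarith
    have hgc := hgcvx p hp.1 q hq.1 a ha (by linarith)
    refine ⟨hmem, ?_⟩
    have hp2 := hp.2
    have hq2 := hq.2
    simp only [smul_eq_mul] at *
    rw [hb'] at *
    nlinarith
  -- positivity of μ₁ S
  have hεS : ∫ y in S, max (x * y - f x - g y) 0 ∂μ₁ = ε := by
    rw [← hE₁ x hx]
    refine (setIntegral_eq_of_subset_of_forall_diff_eq_zero measurableSet_Icc hSsub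
      fun y hy => ?_).symm
    have h2 : ¬ 0 ≤ x * y - f x - g y := fun h => hy.2 ⟨hy.1, h⟩
    simp [max_eq_right (le_of_not_ge h2)]
  have hμSpos : 0 < μ₁ S := by
    rcases eq_zero_or_pos (μ₁ S) with h | h
    · rw [Measure.restrict_eq_zero.mpr h, integral_zero_measure] at hεS
      exact absurd hεS.symm hε.ne'
    · exact h
  have hSne : S.Nonempty := nonempty_of_measure_ne_zero hμSpos.ne'
  set ym := sInf S with hymdef
  set yM := sSup S with hyMdef
  have hymS : ym ∈ S := hScomp.sInf_mem hSne
  have hyMS : yM ∈ S := hScomp.sSup_mem hSne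
  have hyle : ym ≤ yM := csInf_le hScomp.bddBelow hyMS
  have hSeq : S = Icc ym yM :=
    Subset.antisymm (fun y hy => ⟨csInf_le hScomp.bddBelow hy, le_csSup hScomp.bddAbove hy⟩)
      (hconvS.ordConnected.out hymS hyMS)
  -- μ₁ S as a lintegral over volume
  have hμ₁S : μ₁ S = ∫⁻ y in S, ENNReal.ofReal (u₁ y) ∂volume := by
    rw [hμ₁d, withDensity_apply _ hSm, Measure.restrict_restrict hSm,
      inter_eq_self_of_subset_left hSsub]
  -- positivity of the length
  have hLpos : 0 < yM - ym := by
    rcases lt_or_eq_of_le hyle with h | h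
    · linarith
    · exfalso
      have hv : volume S = 0 := by rw [hSeq, ← h]; simp
      have hle : μ₁ S ≤ ENNReal.ofReal Lam * volume S := by
        rw [hμ₁S]
        calc ∫⁻ y in S, ENNReal.ofReal (u₁ y) ∂volume
            ≤ ∫⁻ _ in S, ENNReal.ofReal Lam ∂volume :=
              lintegral_mono_ae ((ae_restrict_iff' hSm).mpr (ae_of_all _ fun y hy =>
                ENNReal.ofReal_le_ofReal (hu₁b y (hSsub hy)).2))
          _ = ENNReal.ofReal Lam * volume S := by rw [setLIntegral_const]
      rw [hv, mul_zero] at hle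
      exact hμSpos.ne' (le_antisymm hle (by simp))
  -- conversion of μ₁-integrals to Lebesgue integrals
  have hu₁S : ContinuousOn u₁ S := hu₁c.mono hSsub
  have hu₁nn : ∀ y ∈ S, 0 ≤ u₁ y := fun y hy => le_trans hlam.le (hu₁b y (hSsub hy)).1
  have hconv_int : ∀ φ : ℝ → ℝ, ContinuousOn φ S →
      ∫ y in S, φ y ∂μ₁ = ∫ y in S, u₁ y * φ y := by
    intro φ hφ
    have hrs : μ₁.restrict S = (volume.restrict S).withDensity
        fun y => ((u₁ y).toNNReal : ℝ≥0∞) := by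
      rw [hμ₁d, restrict_withDensity hSm, Measure.restrict_restrict hSm,
        inter_eq_self_of_subset_left hSsub]
      rfl
    have hmeas : AEMeasurable (fun y => Real.toNNReal (u₁ y)) (volume.restrict S) :=
      measurable_real_toNNReal.comp_aemeasurable (hu₁S.aemeasurable hSm)
    rw [hrs, integral_withDensity_eq_integral_smul₀ hmeas φ]
    refine setIntegral_congr_fun hSm fun y hy => ?_
    rw [NNReal.smul_def, Real.coe_toNNReal _ (hu₁nn y hy), smul_eq_mul]
  set D := ∫ y in S, u₁ y with hDdef
  have hD : (μ₁ S).toReal = D := by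
    have hnn : 0 ≤ᵐ[volume.restrict S] u₁ :=
      (ae_restrict_iff' hSm).mpr (ae_of_all _ hu₁nn)
    have hInt : IntegrableOn u₁ S volume := hu₁S.integrableOn_compact hScomp
    have h2 := MeasureTheory.ofReal_integral_eq_lintegral_ofReal hInt hnn
    rw [hμ₁S, ← h2, ENNReal.toReal_ofReal (setIntegral_nonneg hSm hu₁nn)]
  have hDpos : 0 < D := by
    rw [← hD]; exact ENNReal.toReal_pos hμSpos.ne' (measure_ne_top μ₁ S)
  set m := (ym + yM) / 2 with hmdef
  -- ∫ (y - m) over S is 0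
  have hzero : ∫ y in S, (y - m) = 0 := by
    rw [hSeq, MeasureTheory.integral_Icc_eq_integral_Ioc, ← intervalIntegral.integral_of_le hyle,
      intervalIntegral.integral_sub intervalIntegral.intervalIntegrable_id
        intervalIntegrable_const]
    simp [integral_id, hmdef]
    ring
  -- integrability facts on S (volume)
  have hIid : IntegrableOn (fun y => y - m) S volume :=
    ((continuous_id.sub continuous_const).continuousOn).integrableOn_compact hScomp
  have hIu : IntegrableOn u₁ S volume := hu₁S.integrableOn_compact hScomp
  have hIyu : IntegrableOn (fun y => u₁ y * y) S volume :=
    (hu₁S.mul continuousOn_id).integrableOn_compact hScomp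
  have hImu : IntegrableOn (fun y => (y - m) * u₁ y) S volume :=
    (((continuous_id.sub continuous_const).continuousOn).mul hu₁S).integrableOn_compact hScomp
  set N := ∫ y in S, (y - m) * u₁ y with hNdef
  have hNum : ∫ y in S, u₁ y * y = N + m * D := by
    have heq : ∀ y : ℝ, (y - m) * u₁ y = u₁ y * y - m * u₁ y := fun y => by ring
    rw [hNdef, hDdef]
    simp_rw [heq]
    rw [integral_sub hIyu (hIu.const_mul m), integral_const_mul]
    ring
  -- bound |N|
  have hNbound : |N| ≤ η / 2 * ((yM - ym) * D) := by
    have hNe : N = ∫ y in S, (y - m) * (u₁ y - u₁ ym) := by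
      have heq : ∀ y : ℝ, (y - m) * (u₁ y - u₁ ym)
          = (y - m) * u₁ y - u₁ ym * (y - m) := fun y => by ring
      simp_rw [heq]
      rw [integral_sub hImu (hIid.const_mul (u₁ ym)), integral_const_mul, hzero, mul_zero,
        sub_zero, hNdef]
    have habs : |∫ y in S, (y - m) * (u₁ y - u₁ ym)|
        ≤ ∫ y in S, |y - m| * |u₁ y - u₁ ym| := by
      simpa [Real.norm_eq_abs, abs_mul] using
        norm_integral_le_integral_norm (μ := volume.restrict S)
          (f := fun y => (y - m) * (u₁ y - u₁ ym))
    have hptw : ∀ y ∈ S, |y - m| * |u₁ y - u₁ ym| ≤ (yM - ym) / 2 * (η * u₁ y) := by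
      intro y hy
      have hyIcc : y ∈ Icc ym yM := hSeq ▸ hy
      have h1 : |y - m| ≤ (yM - ym) / 2 := by
        rw [abs_le, hmdef]; constructor
        · linarith [hyIcc.1]
        · linarith [hyIcc.2]
      have hr := hratio ym hymS y hy
      have hu1 : 0 ≤ u₁ y := hu₁nn y hy
      have h2 : |u₁ y - u₁ ym| ≤ η * u₁ y := by
        rw [abs_le]; constructor
        · linarith [hr.2]
        · linarith [hr.1]
      exact mul_le_mul h1 h2 (abs_nonneg _) (by linarith)
    have hmono : ∫ y in S, |y - m| * |u₁ y - u₁ ym|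
        ≤ ∫ y in S, (yM - ym) / 2 * (η * u₁ y) := by
      refine setIntegral_mono_on ?_ ((hIu.const_mul η).const_mul ((yM - ym) / 2)) hSm hptw
      exact (((continuous_id.sub continuous_const).abs.continuousOn).mul
        ((hu₁S.sub continuousOn_const).abs)).integrableOn_compact hScomp
    have hval : ∫ y in S, (yM - ym) / 2 * (η * u₁ y) = (yM - ym) / 2 * (η * D) := by
      rw [integral_const_mul, integral_const_mul, hDdef]
    rw [hNe]
    calc |∫ y in S, (y - m) * (u₁ y - u₁ ym)| ≤ ∫ y in S, |y - m| * |u₁ y - u₁ ym| := habs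
      _ ≤ (yM - ym) / 2 * (η * D) := by rw [← hval]; exact hmono
      _ = η / 2 * ((yM - ym) * D) := by ring
  -- range of the barycenter
  have hrange₁ : ym * D ≤ ∫ y in S, u₁ y * y := by
    calc ym * D = ∫ y in S, u₁ y * ym := by rw [hDdef, mul_comm ym, ← integral_mul_const]
      _ ≤ ∫ y in S, u₁ y * y := by
          refine setIntegral_mono_on (hIu.mul_const ym) hIyu hSm fun y hy => ?_
          have h1 := (hSeq ▸ hy : y ∈ Icc ym yM).1
          nlinarith [hu₁nn y hy]
  have hrange₂ : (∫ y in S, u₁ y * y) ≤ yM * D := by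
    calc (∫ y in S, u₁ y * y) ≤ ∫ y in S, u₁ y * yM := by
          refine setIntegral_mono_on hIyu (hIu.mul_const yM) hSm fun y hy => ?_
          have h1 := (hSeq ▸ hy : y ∈ Icc ym yM).2
          nlinarith [hu₁nn y hy]
      _ = yM * D := by rw [hDdef, mul_comm yM, ← integral_mul_const]
  -- Tmap in terms of Lebesgue integrals
  have hTm : Tmap μ₁ f g a₁ b₁ x = (∫ y in S, u₁ y * y) / D := by
    simp only [Tmap]
    rw [← hSdef, hD, hconv_int (fun y => y) continuous_id.continuousOn]
  set t := Tmap μ₁ f g a₁ b₁ x with htdef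
  have hvol : (volume S).toReal = yM - ym := by
    rw [hSeq, Real.volume_Icc, ENNReal.toReal_ofReal (by linarith)]
  have htm : |t - m| ≤ η / 2 * (yM - ym) := by
    have heq : t - m = N / D := by
      rw [hTm, hNum]; field_simp; ring
    rw [heq, abs_div, abs_of_pos hDpos, div_le_iff₀ hDpos]
    calc |N| ≤ η / 2 * ((yM - ym) * D) := hNbound
      _ = η / 2 * (yM - ym) * D := by ring
  have htlow : ym ≤ t := by
    rw [hTm, le_div_iff₀ hDpos]; exact hrange₁
  have hthigh : t ≤ yM := by
    rw [hTm, div_le_iff₀ hDpos]; exact hrange₂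
  have hym_eq : ymF f g a₁ b₁ x = ym := rfl
  have hyM_eq : yMF f g a₁ b₁ x = yM := rfl
  rw [hym_eq, hyM_eq, hvol]
  have habs := abs_le.mp htm
  have hm1 : m - ym = (yM - ym) / 2 := by rw [hmdef]; ring
  have hm2 : yM - m = (yM - ym) / 2 := by rw [hmdef]; ring
  refine ⟨?_, ?_, ?_, ?_, ?_⟩
  · rw [← hmdef]; exact htm
  · nlinarith [habs.1]
  · nlinarith [habs.2]
  · linarith
  · linarith
end
end

section
/- For every ε > 0 and every pair of ε-potentials (f, g): QOT_ε − OT ≤ ∫_{Ω₀} (f₀ − f) dμ₀ + ∫_{Ω₁} (g₀ − g) dμ₁ ≤ 2 · (QOT_ε − OT). -/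
open MeasureTheory Set
open scoped Classical ENNReal

noncomputable section

/-- the set of couplings of `μ₀` and `μ₁`. -/
def Couplings (μ₀ μ₁ : Measure ℝ) : Set (Measure (ℝ × ℝ)) :=
  {π | π.map Prod.fst = μ₀ ∧ π.map Prod.snd = μ₁}

/-- the unregularized optimal transport cost. -/
def OTcost (μ₀ μ₁ : Measure ℝ) : ℝ≥0∞ :=
  ⨅ π ∈ Couplings μ₀ μ₁, ∫⁻ p, ENNReal.ofReal ((p.1 - p.2) ^ 2 / 2) ∂π

/-- the quadratically regularized optimal transport cost; the penalty is `+∞` when the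
coupling is not absolutely continuous with respect to `μ₀ ⊗ μ₁`. -/
def QOTcost (μ₀ μ₁ : Measure ℝ) (ε : ℝ) : ℝ≥0∞ :=
  ⨅ π ∈ Couplings μ₀ μ₁,
    (∫⁻ p, ENNReal.ofReal ((p.1 - p.2) ^ 2 / 2) ∂π) +
      (if π ≪ μ₀.prod μ₁ then
        ENNReal.ofReal ε / 2 * ∫⁻ p, π.rnDeriv (μ₀.prod μ₁) p ^ 2 ∂(μ₀.prod μ₁)
      else ⊤)

namespace Stmt18Aux

def cl (a b x : ℝ) : ℝ := max a (min b x)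

lemma cl_continuous (a b : ℝ) : Continuous (cl a b) :=
  continuous_const.max (continuous_const.min continuous_id)

lemma cl_mem {a b : ℝ} (hab : a ≤ b) (x : ℝ) : cl a b x ∈ Icc a b :=
  ⟨le_max_left _ _, max_le hab (min_le_left _ _)⟩

lemma cl_eq {a b x : ℝ} (hx : x ∈ Icc a b) : cl a b x = x := by
  have : min b x = x := min_eq_right hx.2
  simp [cl, this, hx.1]

lemma ae_mem_of_null_compl {α : Type*} [MeasurableSpace α] {ν : Measure α} {s : Set α}
    (h : ν sᶜ = 0) : ∀ᵐ x ∂ν, x ∈ s := mem_ae_iff.mpr h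

lemma integrable_of_compact_ae {α : Type*} [MeasurableSpace α] [TopologicalSpace α]
    [OpensMeasurableSpace α] {ν : Measure α} [IsFiniteMeasure ν] {s : Set α}
    (hs : IsCompact s) (hν : ∀ᵐ x ∂ν, x ∈ s) {k : α → ℝ} (hk : Continuous k) :
    Integrable k ν := by
  obtain ⟨C, hC⟩ := hs.exists_bound_of_continuousOn hk.continuousOn
  refine Integrable.mono' (integrable_const C) hk.aestronglyMeasurable ?_
  filter_upwards [hν] with x hx using hC x hx

section Conj
variable {a b : ℝ} {f : ℝ → ℝ}

lemma conj_bddAbove (hf : ContinuousOn f (Icc a b)) (y : ℝ) :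
    BddAbove ((fun x => x * y - f x) '' Icc a b) :=
  (isCompact_Icc.image_of_continuousOn
    ((continuousOn_id.mul continuousOn_const).sub hf)).bddAbove

lemma le_conjOn (hf : ContinuousOn f (Icc a b)) {x : ℝ} (hx : x ∈ Icc a b) (y : ℝ) :
    x * y - f x ≤ conjOn f a b y :=
  le_csSup (conj_bddAbove hf y) (mem_image_of_mem _ hx)

lemma conjOn_le (hab : a ≤ b) {y M : ℝ} (h : ∀ x ∈ Icc a b, x * y - f x ≤ M) :
    conjOn f a b y ≤ M :=
  csSup_le (((nonempty_Icc).mpr hab).image _) (by rintro w ⟨x, hx, rfl⟩; exact h x hx)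

lemma conjOn_lipschitz (hab : a ≤ b) (hf : ContinuousOn f (Icc a b)) :
    LipschitzWith (max |a| |b|).toNNReal (conjOn f a b) := by
  apply LipschitzWith.of_le_add_mul'
  intro y z
  apply conjOn_le hab
  intro x hx
  have hxC : |x| ≤ max |a| |b| := abs_le_max_abs_abs hx.1 hx.2
  have h2 : x * (y - z) ≤ |x| * |y - z| := by
    calc x * (y - z) ≤ |x * (y - z)| := le_abs_self _
    _ = |x| * |y - z| := abs_mul _ _
  have h3 : x * z - f x ≤ conjOn f a b z := le_conjOn hf hx z
  have h4 : |x| * |y - z| ≤ max |a| |b| * |y - z| :=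
    mul_le_mul_of_nonneg_right hxC (abs_nonneg _)
  rw [Real.dist_eq]
  nlinarith [h2, h3, h4]

lemma conjOn_deriv (hab : a ≤ b) (hcf : ConvexOn ℝ (Icc a b) f) (hf : ContinuousOn f (Icc a b))
    {x d : ℝ} (hx : x ∈ Icc a b) (hd : HasDerivWithinAt f d (Icc a b) x) :
    conjOn f a b d = x * d - f x := by
  refine le_antisymm (conjOn_le hab ?_) (le_conjOn hf hx d)
  intro z hz
  rcases lt_trichotomy z x with h | h | h
  · have hs := hcf.slope_le_of_hasDerivWithinAt hz hx h hd
    rw [slope_def_field] at hs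
    have hxz : 0 < x - z := by linarith
    have := (div_le_iff₀ hxz).1 hs
    nlinarith
  · subst h; linarith
  · have hs := hcf.le_slope_of_hasDerivWithinAt hx hz h hd
    rw [slope_def_field] at hs
    have hxz : 0 < z - x := by linarith
    have := (le_div_iff₀ hxz).1 hs
    nlinarith

end Conj

lemma null_compl_of_withDensity {μ : Measure ℝ} {u : ℝ → ℝ≥0∞} {a b : ℝ}
    (h : μ = (volume.restrict (Icc a b)).withDensity u) : μ (Icc a b)ᶜ = 0 := by
  rw [h, withDensity_apply _ measurableSet_Icc.compl,
    Measure.restrict_restrict measurableSet_Icc.compl]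
  simp

variable {μ₀ μ₁ : Measure ℝ} {π : Measure (ℝ × ℝ)}

lemma coupling_isProb [IsProbabilityMeasure μ₀] (h0 : π.map Prod.fst = μ₀) :
    IsProbabilityMeasure π := by
  constructor
  have h := Measure.map_apply (f := @Prod.fst ℝ ℝ) (μ := π) measurable_fst MeasurableSet.univ
  rw [h0] at h
  simpa using h.symm

lemma coupling_ae_box {a₀ b₀ a₁ b₁ : ℝ} (hn₀ : μ₀ (Icc a₀ b₀)ᶜ = 0) (hn₁ : μ₁ (Icc a₁ b₁)ᶜ = 0)
    (h0 : π.map Prod.fst = μ₀) (h1 : π.map Prod.snd = μ₁) :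
    ∀ᵐ p ∂π, p.1 ∈ Icc a₀ b₀ ∧ p.2 ∈ Icc a₁ b₁ := by
  have e0 : π ((Prod.fst ⁻¹' (Icc a₀ b₀))ᶜ) = 0 := by
    rw [← Set.preimage_compl, ← Measure.map_apply measurable_fst measurableSet_Icc.compl, h0]
    exact hn₀
  have e1 : π ((Prod.snd ⁻¹' (Icc a₁ b₁))ᶜ) = 0 := by
    rw [← Set.preimage_compl, ← Measure.map_apply measurable_snd measurableSet_Icc.compl, h1]
    exact hn₁
  exact (ae_mem_of_null_compl e0).and (ae_mem_of_null_compl e1)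

lemma key_ineq {ε C R S X : ℝ} (hε : 0 < ε) (hX : 0 ≤ X) (hR : 0 ≤ R) (hSC : S - C ≤ ε * R) :
    S * X - ε / 2 * R ^ 2 ≤ X * C + ε / 2 * X ^ 2 := by
  nlinarith [mul_nonneg (by linarith : (0:ℝ) ≤ C + ε * R - S) hX,
    mul_nonneg hε.le (sq_nonneg (X - R))]

end Stmt18Aux

set_option maxHeartbeats 1000000 in
theorem stmt18
    (a₀ b₀ a₁ b₁ lam Lam : ℝ) (μ₀ μ₁ : Measure ℝ) (u₀ u₁ : ℝ → ℝ)
    (hab₀ : a₀ < b₀) (hab₁ : a₁ < b₁) (hlam : 0 < lam)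
    (hμ₀ : IsGoodMarginal μ₀ u₀ a₀ b₀ lam Lam)
    (hμ₁ : IsGoodMarginal μ₁ u₁ a₁ b₁ lam Lam) :
    ∀ ε : ℝ, 0 < ε → ∀ f g T₀ f₀ : ℝ → ℝ,
      IsPotentialPair μ₀ μ₁ a₀ b₀ a₁ b₁ ε f g →
      IsMongeMap μ₀ μ₁ T₀ →
      ConvexOn ℝ (Icc a₀ b₀) f₀ →
      (∀ x ∈ Icc a₀ b₀, HasDerivWithinAt f₀ (T₀ x) (Icc a₀ b₀) x) →
      (QOTcost μ₀ μ₁ ε).toReal - (OTcost μ₀ μ₁).toReal ≤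
        (∫ x in Icc a₀ b₀, (f₀ x - f x) ∂μ₀) +
          (∫ y in Icc a₁ b₁, (conjOn f₀ a₀ b₀ y - g y) ∂μ₁) ∧
      (∫ x in Icc a₀ b₀, (f₀ x - f x) ∂μ₀) +
          (∫ y in Icc a₁ b₁, (conjOn f₀ a₀ b₀ y - g y) ∂μ₁) ≤
        2 * ((QOTcost μ₀ μ₁ ε).toReal - (OTcost μ₀ μ₁).toReal) := by
  intro ε hε f g T₀ f₀ hPP hMM hcvx hder
  obtain ⟨hprob₀, hdens₀, -, -⟩ := hμ₀
  obtain ⟨hprob₁, hdens₁, -, -⟩ := hμ₁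
  haveI := hprob₀; haveI := hprob₁
  obtain ⟨⟨Kf, hKf⟩, ⟨Kg, hKg⟩, hPx, hPy⟩ := hPP
  obtain ⟨hT₀mono, hT₀map⟩ := hMM
  have hab₀' : a₀ ≤ b₀ := hab₀.le
  have hab₁' : a₁ ≤ b₁ := hab₁.le
  -- supports
  have hnull₀ : μ₀ (Icc a₀ b₀)ᶜ = 0 := Stmt18Aux.null_compl_of_withDensity hdens₀
  have hnull₁ : μ₁ (Icc a₁ b₁)ᶜ = 0 := Stmt18Aux.null_compl_of_withDensity hdens₁
  have hae₀ : ∀ᵐ x ∂μ₀, x ∈ Icc a₀ b₀ := Stmt18Aux.ae_mem_of_null_compl hnull₀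
  have hae₁ : ∀ᵐ y ∂μ₁, y ∈ Icc a₁ b₁ := Stmt18Aux.ae_mem_of_null_compl hnull₁
  have hres₀ : μ₀.restrict (Icc a₀ b₀) = μ₀ := Measure.restrict_eq_self_of_ae_mem hae₀
  have hres₁ : μ₁.restrict (Icc a₁ b₁) = μ₁ := Measure.restrict_eq_self_of_ae_mem hae₁
  -- clamped continuous versions
  set fc : ℝ → ℝ := fun x => f (Stmt18Aux.cl a₀ b₀ x) with hfcdef
  set gc : ℝ → ℝ := fun y => g (Stmt18Aux.cl a₁ b₁ y) with hgcdef
  have hf₀cont : ContinuousOn f₀ (Icc a₀ b₀) := fun x hx => (hder x hx).continuousWithinAt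
  set f₀c : ℝ → ℝ := fun x => f₀ (Stmt18Aux.cl a₀ b₀ x) with hf₀cdef
  have hfceq : ∀ x ∈ Icc a₀ b₀, fc x = f x := fun x hx => by
    simp [hfcdef, Stmt18Aux.cl_eq hx]
  have hgceq : ∀ y ∈ Icc a₁ b₁, gc y = g y := fun y hy => by
    simp [hgcdef, Stmt18Aux.cl_eq hy]
  have hf₀ceq : ∀ x ∈ Icc a₀ b₀, f₀c x = f₀ x := fun x hx => by
    simp [hf₀cdef, Stmt18Aux.cl_eq hx]
  have hfccont : Continuous fc :=
    hKf.continuousOn.comp_continuous (Stmt18Aux.cl_continuous _ _) (Stmt18Aux.cl_mem hab₀')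
  have hgccont : Continuous gc :=
    hKg.continuousOn.comp_continuous (Stmt18Aux.cl_continuous _ _) (Stmt18Aux.cl_mem hab₁')
  have hf₀ccont : Continuous f₀c :=
    hf₀cont.comp_continuous (Stmt18Aux.cl_continuous _ _) (Stmt18Aux.cl_mem hab₀')
  set g₀ : ℝ → ℝ := conjOn f₀ a₀ b₀ with hg₀def
  have hg₀cont : Continuous g₀ := (Stmt18Aux.conjOn_lipschitz hab₀' hf₀cont).continuous
  -- cost and density
  set c : ℝ × ℝ → ℝ := fun p => (p.1 - p.2) ^ 2 / 2 with hcdef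
  have hccont : Continuous c := by fun_prop
  have hcnn : ∀ p, 0 ≤ c p := fun p => by positivity
  set ρ : ℝ × ℝ → ℝ := fun p => max (p.1 * p.2 - fc p.1 - gc p.2) 0 / ε with hρdef
  have hρcont : Continuous ρ := by
    apply Continuous.div_const
    exact ((continuous_fst.mul continuous_snd).sub (hfccont.comp continuous_fst)
      |>.sub (hgccont.comp continuous_snd)).max continuous_const
  have hρnn : ∀ p, 0 ≤ ρ p := fun p => div_nonneg (le_max_right _ _) hε.le
  set Fc : ℝ → ℝ := fun x => x ^ 2 / 2 - fc x with hFcdef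
  set Gc : ℝ → ℝ := fun y => y ^ 2 / 2 - gc y with hGcdef
  set F₀ : ℝ → ℝ := fun x => x ^ 2 / 2 - f₀c x with hF₀def
  set G₀ : ℝ → ℝ := fun y => y ^ 2 / 2 - g₀ y with hG₀def
  have hFccont : Continuous Fc := by fun_prop
  have hGccont : Continuous Gc := by fun_prop
  have hF₀cont : Continuous F₀ := by fun_prop
  have hG₀cont : Continuous G₀ := by fun_prop
  -- integrability helpers
  have hint₀ : ∀ k : ℝ → ℝ, Continuous k → Integrable k μ₀ := fun k hk =>
    Stmt18Aux.integrable_of_compact_ae isCompact_Icc hae₀ hk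
  have hint₁ : ∀ k : ℝ → ℝ, Continuous k → Integrable k μ₁ := fun k hk =>
    Stmt18Aux.integrable_of_compact_ae isCompact_Icc hae₁ hk
  have hPfst : (μ₀.prod μ₁).map Prod.fst = μ₀ := by simp
  have hPsnd : (μ₀.prod μ₁).map Prod.snd = μ₁ := by simp
  have haeP : ∀ᵐ p ∂(μ₀.prod μ₁), p.1 ∈ Icc a₀ b₀ ∧ p.2 ∈ Icc a₁ b₁ :=
    Stmt18Aux.coupling_ae_box hnull₀ hnull₁ hPfst hPsnd
  have hboxcpt : IsCompact ((Icc a₀ b₀) ×ˢ (Icc a₁ b₁)) := isCompact_Icc.prod isCompact_Icc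
  have haeP' : ∀ᵐ p ∂(μ₀.prod μ₁), p ∈ (Icc a₀ b₀) ×ˢ (Icc a₁ b₁) := by
    filter_upwards [haeP] with p hp using mem_prod.2 hp
  have hintP : ∀ k : ℝ × ℝ → ℝ, Continuous k → Integrable k (μ₀.prod μ₁) := fun k hk =>
    Stmt18Aux.integrable_of_compact_ae hboxcpt haeP' hk
  -- ε-potential conditions, clamped form
  have hMx : ∀ x ∈ Icc a₀ b₀, ∫ y, max (x * y - fc x - gc y) 0 ∂μ₁ = ε := by
    intro x hx
    have h := hPx x hx
    rw [hres₁] at h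
    rw [← h]
    apply integral_congr_ae
    filter_upwards [hae₁] with y hy
    rw [hfceq x hx, hgceq y hy]
  have hMy : ∀ y ∈ Icc a₁ b₁, ∫ x, max (x * y - fc x - gc y) 0 ∂μ₀ = ε := by
    intro y hy
    have h := hPy y hy
    rw [hres₀] at h
    rw [← h]
    apply integral_congr_ae
    filter_upwards [hae₀] with x hx
    rw [hfceq x hx, hgceq y hy]
  have hInner1 : ∀ x ∈ Icc a₀ b₀, ∫⁻ y, ENNReal.ofReal (ρ (x, y)) ∂μ₁ = 1 := by
    intro x hx
    have hint : Integrable (fun y => ρ (x, y)) μ₁ :=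
      hint₁ _ (hρcont.comp (Continuous.prodMk_right x))
    rw [← ofReal_integral_eq_lintegral_ofReal hint (ae_of_all _ fun y => hρnn (x, y))]
    have : ∫ y, ρ (x, y) ∂μ₁ = 1 := by
      simp only [hρdef]
      rw [integral_div, hMx x hx, div_self hε.ne']
    rw [this, ENNReal.ofReal_one]
  have hInner2 : ∀ y ∈ Icc a₁ b₁, ∫⁻ x, ENNReal.ofReal (ρ (x, y)) ∂μ₀ = 1 := by
    intro y hy
    have hint : Integrable (fun x => ρ (x, y)) μ₀ :=
      hint₀ _ (hρcont.comp (continuous_id.prodMk continuous_const))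
    rw [← ofReal_integral_eq_lintegral_ofReal hint (ae_of_all _ fun x => hρnn (x, y))]
    have : ∫ x, ρ (x, y) ∂μ₀ = 1 := by
      simp only [hρdef]
      rw [integral_div, hMy y hy, div_self hε.ne']
    rw [this, ENNReal.ofReal_one]
  -- the optimal regularized coupling
  have hρmeas : Measurable fun p => ENNReal.ofReal (ρ p) :=
    ENNReal.measurable_ofReal.comp hρcont.measurable
  set π_ε : Measure (ℝ × ℝ) := (μ₀.prod μ₁).withDensity (fun p => ENNReal.ofReal (ρ p))
    with hπεdef
  have hπεfst : π_ε.map Prod.fst = μ₀ := by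
    ext s hs
    rw [Measure.map_apply measurable_fst hs]
    have hps : MeasurableSet (Prod.fst ⁻¹' s : Set (ℝ × ℝ)) := measurable_fst hs
    rw [hπεdef, withDensity_apply _ hps, ← lintegral_indicator hps,
      lintegral_prod _ ((hρmeas.indicator hps).aemeasurable)]
    have hcongr : ∀ᵐ x ∂μ₀,
        (∫⁻ y, (Prod.fst ⁻¹' s).indicator (fun p => ENNReal.ofReal (ρ p)) (x, y) ∂μ₁)
          = s.indicator (1 : ℝ → ℝ≥0∞) x := by
      filter_upwards [hae₀] with x hx
      by_cases hxs : x ∈ s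
      · have heq : ∀ y : ℝ,
            (Prod.fst ⁻¹' s).indicator (fun p => ENNReal.ofReal (ρ p)) (x, y)
              = ENNReal.ofReal (ρ (x, y)) := fun y =>
          indicator_of_mem (by simpa using hxs) _
        rw [lintegral_congr heq, hInner1 x hx, indicator_of_mem hxs]; rfl
      · have heq : ∀ y : ℝ,
            (Prod.fst ⁻¹' s).indicator (fun p => ENNReal.ofReal (ρ p)) (x, y) = 0 := fun y =>
          indicator_of_notMem (by simpa using hxs) _
        rw [lintegral_congr heq, lintegral_zero, indicator_of_notMem hxs]
    rw [lintegral_congr_ae hcongr, lintegral_indicator_one hs]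
  have hπεsnd : π_ε.map Prod.snd = μ₁ := by
    ext s hs
    rw [Measure.map_apply measurable_snd hs]
    have hps : MeasurableSet (Prod.snd ⁻¹' s : Set (ℝ × ℝ)) := measurable_snd hs
    rw [hπεdef, withDensity_apply _ hps, ← lintegral_indicator hps,
      lintegral_prod_symm _ ((hρmeas.indicator hps).aemeasurable)]
    have hcongr : ∀ᵐ y ∂μ₁,
        (∫⁻ x, (Prod.snd ⁻¹' s).indicator (fun p => ENNReal.ofReal (ρ p)) (x, y) ∂μ₀)
          = s.indicator (1 : ℝ → ℝ≥0∞) y := by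
      filter_upwards [hae₁] with y hy
      by_cases hys : y ∈ s
      · have heq : ∀ x : ℝ,
            (Prod.snd ⁻¹' s).indicator (fun p => ENNReal.ofReal (ρ p)) (x, y)
              = ENNReal.ofReal (ρ (x, y)) := fun x =>
          indicator_of_mem (by simpa using hys) _
        rw [lintegral_congr heq, hInner2 y hy, indicator_of_mem hys]; rfl
      · have heq : ∀ x : ℝ,
            (Prod.snd ⁻¹' s).indicator (fun p => ENNReal.ofReal (ρ p)) (x, y) = 0 := fun x =>
          indicator_of_notMem (by simpa using hys) _
        rw [lintegral_congr heq, lintegral_zero, indicator_of_notMem hys]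
    rw [lintegral_congr_ae hcongr, lintegral_indicator_one hs]
  have hπεcpl : π_ε ∈ Couplings μ₀ μ₁ := ⟨hπεfst, hπεsnd⟩
  haveI hπεprob : IsProbabilityMeasure π_ε := Stmt18Aux.coupling_isProb hπεfst
  have haeπε : ∀ᵐ p ∂π_ε, p ∈ (Icc a₀ b₀) ×ˢ (Icc a₁ b₁) := by
    filter_upwards [Stmt18Aux.coupling_ae_box hnull₀ hnull₁ hπεfst hπεsnd] with p hp
    exact mem_prod.2 hp
  have hintπε : ∀ k : ℝ × ℝ → ℝ, Continuous k → Integrable k π_ε := fun k hk =>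
    Stmt18Aux.integrable_of_compact_ae hboxcpt haeπε hk
  set IF : ℝ := ∫ x, Fc x ∂μ₀ with hIFdef
  set IG : ℝ := ∫ y, Gc y ∂μ₁ with hIGdef
  set IF₀ : ℝ := ∫ x, F₀ x ∂μ₀ with hIF₀def
  set IG₀ : ℝ := ∫ y, G₀ y ∂μ₁ with hIG₀def
  set A : ℝ := ∫ p, ρ p ^ 2 ∂(μ₀.prod μ₁) with hAdef
  have hAnn : 0 ≤ A := integral_nonneg fun p => sq_nonneg _
  have hintρ2 : Integrable (fun p => ρ p ^ 2) (μ₀.prod μ₁) := hintP _ (by fun_prop)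
  -- withDensity transfer
  have hwd : ∀ k : ℝ × ℝ → ℝ, Continuous k →
      ∫ p, k p ∂π_ε = ∫ p, ρ p * k p ∂(μ₀.prod μ₁) := by
    intro k hk
    rw [hπεdef,
      show (fun p => ENNReal.ofReal (ρ p)) = fun p => ((ρ p).toNNReal : ℝ≥0∞)
        from rfl,
      integral_withDensity_eq_integral_smul hρcont.measurable.real_toNNReal k]
    apply integral_congr_ae (ae_of_all _ fun p => ?_)
    simp [NNReal.smul_def, Real.coe_toNNReal _ (hρnn p)]
  -- marginal transfer for couplings
  have hmarg : ∀ (π : Measure (ℝ × ℝ)) (φ ψ : ℝ → ℝ), Continuous φ → Continuous ψ →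
      π.map Prod.fst = μ₀ → π.map Prod.snd = μ₁ →
      ∫ p, (φ p.1 + ψ p.2) ∂π = (∫ x, φ x ∂μ₀) + ∫ y, ψ y ∂μ₁ := by
    intro π φ ψ hφ hψ h0 h1
    haveI : IsProbabilityMeasure π := Stmt18Aux.coupling_isProb h0
    have haeπ : ∀ᵐ p ∂π, p ∈ (Icc a₀ b₀) ×ˢ (Icc a₁ b₁) := by
      filter_upwards [Stmt18Aux.coupling_ae_box hnull₀ hnull₁ h0 h1] with p hp
      exact mem_prod.2 hp
    have i1 : Integrable (fun p : ℝ × ℝ => φ p.1) π :=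
      Stmt18Aux.integrable_of_compact_ae hboxcpt haeπ (hφ.comp continuous_fst)
    have i2 : Integrable (fun p : ℝ × ℝ => ψ p.2) π :=
      Stmt18Aux.integrable_of_compact_ae hboxcpt haeπ (hψ.comp continuous_snd)
    rw [integral_add i1 i2]
    congr 1
    · rw [← h0, integral_map measurable_fst.aemeasurable hφ.aestronglyMeasurable]
    · rw [← h1, integral_map measurable_snd.aemeasurable hψ.aestronglyMeasurable]
  -- pointwise identity for the cost against ρ
  have hptid : ∀ p : ℝ × ℝ, c p * ρ p = (Fc p.1 + Gc p.2) * ρ p - ε * ρ p ^ 2 := by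
    intro p
    have he : Fc p.1 + Gc p.2 - c p = p.1 * p.2 - fc p.1 - gc p.2 := by
      simp only [hFcdef, hGcdef, hcdef]; ring
    rcases le_or_gt (p.1 * p.2 - fc p.1 - gc p.2) 0 with h | h
    · have h0 : ρ p = 0 := by
        simp only [hρdef]; rw [max_eq_right h]; simp
      rw [h0]; ring
    · have hm : max (p.1 * p.2 - fc p.1 - gc p.2) 0 = p.1 * p.2 - fc p.1 - gc p.2 :=
        max_eq_left h.le
      have hερ : ε * ρ p = p.1 * p.2 - fc p.1 - gc p.2 := by
        simp only [hρdef, hm]; field_simp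
      linear_combination ρ p * hερ - ρ p * he
  have hcostπε : ∫ p, c p ∂π_ε = IF + IG - ε * A := by
    rw [hwd c hccont]
    have hpt : ∀ p, ρ p * c p = (Fc p.1 + Gc p.2) * ρ p - ε * ρ p ^ 2 := fun p => by
      rw [mul_comm]; exact hptid p
    rw [integral_congr_ae (ae_of_all _ hpt),
      integral_sub (hintP _ (by fun_prop)) (hintρ2.const_mul ε), integral_const_mul ε _]
    congr 1
    have hwd2 := hwd (fun p => Fc p.1 + Gc p.2) (by fun_prop)
    rw [show (fun p : ℝ × ℝ => (Fc p.1 + Gc p.2) * ρ p)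
        = fun p : ℝ × ℝ => ρ p * (Fc p.1 + Gc p.2) by funext p; ring, ← hwd2,
      hmarg π_ε Fc Gc hFccont hGccont hπεfst hπεsnd]
  -- lintegral of the cost over a coupling, real form
  have hlintc : ∀ π : Measure (ℝ × ℝ), π.map Prod.fst = μ₀ → π.map Prod.snd = μ₁ →
      ∫⁻ p, ENNReal.ofReal ((p.1 - p.2) ^ 2 / 2) ∂π = ENNReal.ofReal (∫ p, c p ∂π) := by
    intro π h0 h1
    haveI : IsProbabilityMeasure π := Stmt18Aux.coupling_isProb h0
    have haeπ : ∀ᵐ p ∂π, p ∈ (Icc a₀ b₀) ×ˢ (Icc a₁ b₁) := by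
      filter_upwards [Stmt18Aux.coupling_ae_box hnull₀ hnull₁ h0 h1] with p hp
      exact mem_prod.2 hp
    have hint : Integrable c π := Stmt18Aux.integrable_of_compact_ae hboxcpt haeπ hccont
    exact (ofReal_integral_eq_lintegral_ofReal hint (ae_of_all _ hcnn)).symm
  have hcost0 : 0 ≤ ∫ p, c p ∂π_ε := integral_nonneg hcnn
  have hrn : π_ε.rnDeriv (μ₀.prod μ₁) =ᵐ[μ₀.prod μ₁] fun p => ENNReal.ofReal (ρ p) := by
    rw [hπεdef]; exact Measure.rnDeriv_withDensity _ hρmeas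
  have hlintrn : ∫⁻ p, π_ε.rnDeriv (μ₀.prod μ₁) p ^ 2 ∂(μ₀.prod μ₁) = ENNReal.ofReal A := by
    have h1 : ∫⁻ p, π_ε.rnDeriv (μ₀.prod μ₁) p ^ 2 ∂(μ₀.prod μ₁)
        = ∫⁻ p, ENNReal.ofReal (ρ p ^ 2) ∂(μ₀.prod μ₁) := by
      apply lintegral_congr_ae
      filter_upwards [hrn] with p hp
      rw [hp, ← ENNReal.ofReal_pow (hρnn p)]
    rw [h1, ← ofReal_integral_eq_lintegral_ofReal hintρ2 (ae_of_all _ fun p => sq_nonneg _)]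
  have hεfact : ∀ B : ℝ, (ENNReal.ofReal ε) / 2 * ENNReal.ofReal B
      = ENNReal.ofReal (ε / 2 * B) := by
    intro B
    rw [ENNReal.ofReal_mul (by positivity), ENNReal.ofReal_div_of_pos two_pos,
      ENNReal.ofReal_ofNat]
  have hQOTle : QOTcost μ₀ μ₁ ε ≤ ENNReal.ofReal (IF + IG - ε / 2 * A) := by
    have hval : (∫⁻ p, ENNReal.ofReal ((p.1 - p.2) ^ 2 / 2) ∂π_ε) +
        (if π_ε ≪ μ₀.prod μ₁ then
          ENNReal.ofReal ε / 2 * ∫⁻ p, π_ε.rnDeriv (μ₀.prod μ₁) p ^ 2 ∂(μ₀.prod μ₁)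
        else ⊤) = ENNReal.ofReal (IF + IG - ε / 2 * A) := by
      have hac : π_ε ≪ μ₀.prod μ₁ := by
        rw [hπεdef]; exact withDensity_absolutelyContinuous _ _
      rw [if_pos hac, hlintrn, hεfact A, hlintc π_ε hπεfst hπεsnd, hcostπε,
        ← ENNReal.ofReal_add (by rw [← hcostπε]; exact hcost0) (by positivity)]
      congr 1; ring
    calc QOTcost μ₀ μ₁ ε ≤ _ := iInf₂_le π_ε hπεcpl
    _ = _ := hval
  -- generic real lower bound for couplings
  have hLBreal : ∀ π : Measure (ℝ × ℝ), π.map Prod.fst = μ₀ → π.map Prod.snd = μ₁ →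
      IF₀ + IG₀ ≤ ∫ p, c p ∂π := by
    intro π h0 h1
    haveI : IsProbabilityMeasure π := Stmt18Aux.coupling_isProb h0
    have haeπ : ∀ᵐ p ∂π, p ∈ (Icc a₀ b₀) ×ˢ (Icc a₁ b₁) := by
      filter_upwards [Stmt18Aux.coupling_ae_box hnull₀ hnull₁ h0 h1] with p hp
      exact mem_prod.2 hp
    have hint : Integrable c π := Stmt18Aux.integrable_of_compact_ae hboxcpt haeπ hccont
    have hint2 : Integrable (fun p : ℝ × ℝ => F₀ p.1 + G₀ p.2) π :=
      Stmt18Aux.integrable_of_compact_ae hboxcpt haeπ (by fun_prop)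
    have hptle : ∀ᵐ p ∂π, F₀ p.1 + G₀ p.2 ≤ c p := by
      filter_upwards [haeπ] with p hp
      obtain ⟨hp1, hp2⟩ := mem_prod.1 hp
      have hxy : p.1 * p.2 - f₀ p.1 ≤ g₀ p.2 := Stmt18Aux.le_conjOn hf₀cont hp1 p.2
      have hfe : f₀c p.1 = f₀ p.1 := hf₀ceq p.1 hp1
      simp only [hF₀def, hG₀def, hcdef]
      rw [hfe]
      nlinarith [hxy]
    calc IF₀ + IG₀ = ∫ p, (F₀ p.1 + G₀ p.2) ∂π :=
          (hmarg π F₀ G₀ hF₀cont hG₀cont h0 h1).symm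
    _ ≤ ∫ p, c p ∂π := integral_mono_ae hint2 hint hptle
  -- the Monge coupling
  have hT₀meas : Measurable T₀ := hT₀mono.measurable
  have hφmeas : Measurable (fun x => (x, T₀ x)) := measurable_id.prodMk hT₀meas
  set π₀ : Measure (ℝ × ℝ) := μ₀.map (fun x => (x, T₀ x)) with hπ₀def
  have hπ₀fst : π₀.map Prod.fst = μ₀ := by
    rw [hπ₀def, Measure.map_map measurable_fst hφmeas,
      show (Prod.fst ∘ fun x : ℝ => (x, T₀ x)) = id from rfl, Measure.map_id]
  have hπ₀snd : π₀.map Prod.snd = μ₁ := by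
    rw [hπ₀def, Measure.map_map measurable_snd hφmeas,
      show (Prod.snd ∘ fun x : ℝ => (x, T₀ x)) = T₀ from rfl, hT₀map]
  have hπ₀cpl : π₀ ∈ Couplings μ₀ μ₁ := ⟨hπ₀fst, hπ₀snd⟩
  have hkeyT : ∀ᵐ x ∂μ₀, c (x, T₀ x) = F₀ x + G₀ (T₀ x) := by
    filter_upwards [hae₀] with x hx
    have hgT : g₀ (T₀ x) = x * T₀ x - f₀ x :=
      Stmt18Aux.conjOn_deriv hab₀' hcvx hf₀cont hx (hder x hx)
    have hfe : f₀c x = f₀ x := hf₀ceq x hx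
    simp only [hF₀def, hG₀def, hcdef, hgT, hfe]
    ring
  have hcostπ₀ : ∫ p, c p ∂π₀ = IF₀ + IG₀ := by
    rw [hπ₀def, integral_map hφmeas.aemeasurable hccont.aestronglyMeasurable]
    have hGT : Integrable (fun x => G₀ (T₀ x)) μ₀ := by
      have h := hint₁ _ hG₀cont
      rw [← hT₀map] at h
      exact (integrable_map_measure hG₀cont.aestronglyMeasurable hT₀meas.aemeasurable).1 h
    rw [integral_congr_ae hkeyT, integral_add (hint₀ _ hF₀cont) hGT]
    congr 1
    rw [hIG₀def, ← hT₀map, integral_map hT₀meas.aemeasurable hG₀cont.aestronglyMeasurable]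
  have hvonn : 0 ≤ IF₀ + IG₀ := by rw [← hcostπ₀]; exact integral_nonneg hcnn
  have hOTeq : OTcost μ₀ μ₁ = ENNReal.ofReal (IF₀ + IG₀) := by
    apply le_antisymm
    · calc OTcost μ₀ μ₁ ≤ ∫⁻ p, ENNReal.ofReal ((p.1 - p.2) ^ 2 / 2) ∂π₀ :=
            iInf₂_le π₀ hπ₀cpl
      _ = ENNReal.ofReal (∫ p, c p ∂π₀) := hlintc π₀ hπ₀fst hπ₀snd
      _ = _ := by rw [hcostπ₀]
    · apply le_iInf₂
      intro π hπ
      rw [hlintc π hπ.1 hπ.2]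
      exact ENNReal.ofReal_le_ofReal (hLBreal π hπ.1 hπ.2)
  -- lower bound for the regularized problem
  obtain ⟨Mc, hMc⟩ := hboxcpt.exists_bound_of_continuousOn hccont.continuousOn
  obtain ⟨Mfg, hMfg⟩ := hboxcpt.exists_bound_of_continuousOn
    (Continuous.continuousOn (by fun_prop : Continuous fun p : ℝ × ℝ => Fc p.1 + Gc p.2))
  have hQOTge : ENNReal.ofReal (IF + IG - ε / 2 * A) ≤ QOTcost μ₀ μ₁ ε := by
    apply le_iInf₂
    intro π hπ
    haveI : IsProbabilityMeasure π := Stmt18Aux.coupling_isProb hπ.1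
    by_cases hac : π ≪ μ₀.prod μ₁
    swap
    · rw [if_neg hac]; simp
    rw [if_pos hac]
    set ξ : ℝ × ℝ → ℝ≥0∞ := π.rnDeriv (μ₀.prod μ₁) with hξdef
    have hξm : Measurable ξ := Measure.measurable_rnDeriv _ _
    have hπeq : (μ₀.prod μ₁).withDensity ξ = π := Measure.withDensity_rnDeriv_eq _ _ hac
    have hlint1 : ∫⁻ p, ξ p ∂(μ₀.prod μ₁) = 1 := by
      rw [hξdef, Measure.lintegral_rnDeriv hac]; exact measure_univ
    have hξlt : ∀ᵐ p ∂(μ₀.prod μ₁), ξ p < ⊤ :=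
      ae_lt_top hξm (by rw [hlint1]; exact ENNReal.one_ne_top)
    by_cases hfin : ∫⁻ p, ξ p ^ 2 ∂(μ₀.prod μ₁) = ⊤
    · rw [hfin, ENNReal.mul_top (by
        simp only [ne_eq, ENNReal.div_eq_zero_iff, ENNReal.ofReal_eq_zero, not_or]
        constructor
        · linarith
        · exact ENNReal.ofNat_ne_top)]
      simp
    -- finite case
    set ξr : ℝ × ℝ → ℝ := fun p => (ξ p).toReal with hξrdef
    have hξrnn : ∀ p, 0 ≤ ξr p := fun p => ENNReal.toReal_nonneg
    have hξrm : Measurable ξr := hξm.ennreal_toReal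
    have hξ2int : Integrable (fun p => ξr p ^ 2) (μ₀.prod μ₁) := by
      have h := integrable_toReal_of_lintegral_ne_top (hξm.pow_const 2).aemeasurable hfin
      refine h.congr (ae_of_all _ fun p => ?_)
      rw [hξrdef]; exact ENNReal.toReal_pow _ _
    have hξint : Integrable ξr (μ₀.prod μ₁) :=
      integrable_toReal_of_lintegral_ne_top hξm.aemeasurable
        (by rw [hlint1]; exact ENNReal.one_ne_top)
    have hlq : ∫⁻ p, ξ p ^ 2 ∂(μ₀.prod μ₁)
        = ENNReal.ofReal (∫ p, ξr p ^ 2 ∂(μ₀.prod μ₁)) := by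
      have h1 : ∫⁻ p, ξ p ^ 2 ∂(μ₀.prod μ₁)
          = ∫⁻ p, ENNReal.ofReal (ξr p ^ 2) ∂(μ₀.prod μ₁) := by
        apply lintegral_congr_ae
        filter_upwards [hξlt] with p hp
        rw [hξrdef, ← ENNReal.toReal_pow,
          ENNReal.ofReal_toReal (by exact ENNReal.pow_ne_top hp.ne)]
      rw [h1, ← ofReal_integral_eq_lintegral_ofReal hξ2int (ae_of_all _ fun p => sq_nonneg _)]
    have hπeq' : π = (μ₀.prod μ₁).withDensity (fun p => ((ξ p).toNNReal : ℝ≥0∞)) := by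
      rw [← hπeq]
      apply withDensity_congr_ae
      filter_upwards [hξlt] with p hp
      rw [ENNReal.coe_toNNReal hp.ne]
    have hsmul : ∀ k : ℝ × ℝ → ℝ, Continuous k →
        ∫ p, k p ∂π = ∫ p, ξr p * k p ∂(μ₀.prod μ₁) := by
      intro k hk
      rw [hπeq', integral_withDensity_eq_integral_smul hξm.ennreal_toNNReal k]
      apply integral_congr_ae (ae_of_all _ fun p => ?_)
      simp only [NNReal.smul_def]
      norm_num [hξrdef, ENNReal.coe_toNNReal_eq_toReal]
    have hcξint : Integrable (fun p => ξr p * c p) (μ₀.prod μ₁) := by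
      refine Integrable.mono' (hξint.const_mul Mc) (hξrm.mul hccont.measurable).aestronglyMeasurable ?_
      filter_upwards [haeP'] with p hp
      have h1 : |c p| ≤ Mc := by
        have := hMc p hp; rwa [Real.norm_eq_abs] at this
      rw [Real.norm_eq_abs, abs_mul, abs_of_nonneg (hξrnn p), mul_comm Mc (ξr p)]
      exact mul_le_mul_of_nonneg_left h1 (hξrnn p)
    have hFGξint : Integrable (fun p : ℝ × ℝ => (Fc p.1 + Gc p.2) * ξr p) (μ₀.prod μ₁) := by
      refine Integrable.mono' (hξint.const_mul Mfg)
        (((hFccont.comp continuous_fst).add (hGccont.comp continuous_snd)).measurable.mul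
          hξrm).aestronglyMeasurable ?_
      filter_upwards [haeP'] with p hp
      have h1 : |Fc p.1 + Gc p.2| ≤ Mfg := by
        have := hMfg p hp; rwa [Real.norm_eq_abs] at this
      rw [Real.norm_eq_abs, abs_mul, abs_of_nonneg (hξrnn p), mul_comm Mfg (ξr p)]
      calc |Fc p.1 + Gc p.2| * ξr p = ξr p * |Fc p.1 + Gc p.2| := mul_comm _ _
      _ ≤ ξr p * Mfg := mul_le_mul_of_nonneg_left h1 (hξrnn p)
    have hpt : ∀ p : ℝ × ℝ, (Fc p.1 + Gc p.2) * ξr p - ε / 2 * ρ p ^ 2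
        ≤ ξr p * c p + ε / 2 * ξr p ^ 2 := by
      intro p
      have hεr : ε * ρ p = max (p.1 * p.2 - fc p.1 - gc p.2) 0 := by
        simp only [hρdef]; field_simp
      have he : Fc p.1 + Gc p.2 - c p ≤ ε * ρ p := by
        rw [hεr]
        have h2 : Fc p.1 + Gc p.2 - c p = p.1 * p.2 - fc p.1 - gc p.2 := by
          simp only [hFcdef, hGcdef, hcdef]; ring
        rw [h2]
        exact le_max_left _ _
      exact Stmt18Aux.key_ineq hε (hξrnn p) (hρnn p) he
    have hmono : ∫ p, ((Fc p.1 + Gc p.2) * ξr p - ε / 2 * ρ p ^ 2) ∂(μ₀.prod μ₁)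
        ≤ ∫ p, (ξr p * c p + ε / 2 * ξr p ^ 2) ∂(μ₀.prod μ₁) :=
      integral_mono (hFGξint.sub (hintρ2.const_mul (ε / 2)))
        (hcξint.add (hξ2int.const_mul (ε / 2))) (fun p => hpt p)
    rw [integral_sub hFGξint (hintρ2.const_mul (ε / 2)),
      integral_add hcξint (hξ2int.const_mul (ε / 2)),
      integral_const_mul, integral_const_mul] at hmono
    have hFGmarg : ∫ p : ℝ × ℝ, (Fc p.1 + Gc p.2) * ξr p ∂(μ₀.prod μ₁) = IF + IG := by
      have h := hsmul (fun p => Fc p.1 + Gc p.2) (by fun_prop)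
      rw [show (fun p : ℝ × ℝ => (Fc p.1 + Gc p.2) * ξr p)
          = fun p : ℝ × ℝ => ξr p * (Fc p.1 + Gc p.2) by funext p; ring, ← h,
        hmarg π Fc Gc hFccont hGccont hπ.1 hπ.2]
    rw [hFGmarg] at hmono
    have hcπ : ∫ p, c p ∂π = ∫ p, ξr p * c p ∂(μ₀.prod μ₁) := hsmul c hccont
    have hint2nn : 0 ≤ ∫ p, ξr p ^ 2 ∂(μ₀.prod μ₁) := integral_nonneg fun p => sq_nonneg _
    have hstep : ENNReal.ofReal (IF + IG - ε / 2 * A)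
        ≤ ENNReal.ofReal ((∫ p, c p ∂π) + ε / 2 * ∫ p, ξr p ^ 2 ∂(μ₀.prod μ₁)) := by
      apply ENNReal.ofReal_le_ofReal
      rw [hcπ]; linarith [hmono]
    rw [hlintc π hπ.1 hπ.2, hlq, hεfact (∫ p, ξr p ^ 2 ∂(μ₀.prod μ₁))]
    rw [← ENNReal.ofReal_add (integral_nonneg hcnn) (mul_nonneg (by linarith) hint2nn)]
    exact hstep
  -- final assembly
  have hQOTeq : QOTcost μ₀ μ₁ ε = ENNReal.ofReal (IF + IG - ε / 2 * A) :=
    le_antisymm hQOTle hQOTge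
  have hvqnn : 0 ≤ IF + IG - ε / 2 * A := by
    have h0 : 0 ≤ IF + IG - ε * A := by rw [← hcostπε]; exact hcost0
    nlinarith [mul_nonneg hε.le hAnn]
  have hQr : (QOTcost μ₀ μ₁ ε).toReal = IF + IG - ε / 2 * A := by
    rw [hQOTeq, ENNReal.toReal_ofReal hvqnn]
  have hOr : (OTcost μ₀ μ₁).toReal = IF₀ + IG₀ := by
    rw [hOTeq, ENNReal.toReal_ofReal hvonn]
  have hD0 : ∫ x in Icc a₀ b₀, (f₀ x - f x) ∂μ₀ = IF - IF₀ := by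
    rw [hres₀, hIFdef, hIF₀def, ← integral_sub (hint₀ _ hFccont) (hint₀ _ hF₀cont)]
    apply integral_congr_ae
    filter_upwards [hae₀] with x hx
    simp only [hFcdef, hF₀def]
    rw [hfceq x hx, hf₀ceq x hx]; ring
  have hD1 : ∫ y in Icc a₁ b₁, (g₀ y - g y) ∂μ₁ = IG - IG₀ := by
    rw [hres₁, hIGdef, hIG₀def, ← integral_sub (hint₁ _ hGccont) (hint₁ _ hG₀cont)]
    apply integral_congr_ae
    filter_upwards [hae₁] with y hy
    simp only [hGcdef, hG₀def]
    rw [hgceq y hy]; ring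
  have hεA : IF₀ + IG₀ ≤ IF + IG - ε * A := by
    rw [← hcostπε]; exact hLBreal π_ε hπεfst hπεsnd
  have hbridge : ε * A = 2 * (ε / 2 * A) := by ring
  have hhalf : 0 ≤ ε / 2 * A := mul_nonneg (by linarith) hAnn
  rw [hQr, hOr, hD0, hD1]
  constructor
  · linarith
  · linarith
end
end

section
/- There exist constants C > 0 and ε₀ > 0 such that for every 0 < ε < ε₀ and every pair of ε-potentials (f, g) normalized so that ∫ f dμ₀ = ∫ g dμ₁ and with the Kantorovich potentials normalized so that ∫ f₀ dμ₀ = ∫ g₀ dμ₁: | ∫_{Ω₀} (f − f₀) dμ₀ | ≤ C · ε^{2/3}. -/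
open MeasureTheory Set
open scoped Classical ENNReal

noncomputable section

def cdf (μ : Measure ℝ) (c : ℝ) : ℝ := (μ (Iic c)).toReal

variable {μ : Measure ℝ} {u : ℝ → ℝ} {a b lam Lam : ℝ}

lemma gm_apply (h : IsGoodMarginal μ u a b lam Lam) {s : Set ℝ} (hs : MeasurableSet s) :
    μ s = ∫⁻ x in s ∩ Icc a b, ENNReal.ofReal (u x) ∂volume := by
  rw [h.2.1, withDensity_apply _ hs, Measure.restrict_restrict hs]

lemma gm_le (h : IsGoodMarginal μ u a b lam Lam) {s : Set ℝ} (hs : MeasurableSet s) :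
    μ s ≤ ENNReal.ofReal Lam * volume (s ∩ Icc a b) := by
  rw [gm_apply h hs]
  calc ∫⁻ x in s ∩ Icc a b, ENNReal.ofReal (u x) ∂volume
      ≤ ∫⁻ _ in s ∩ Icc a b, ENNReal.ofReal Lam ∂volume := by
        refine setLIntegral_mono_ae' (hs.inter measurableSet_Icc) (ae_of_all _ ?_)
        exact fun x hx => ENNReal.ofReal_le_ofReal (h.2.2.2 x hx.2).2
    _ = ENNReal.ofReal Lam * volume (s ∩ Icc a b) := by
        rw [setLIntegral_const, mul_comm]

lemma gm_ge (h : IsGoodMarginal μ u a b lam Lam) {c d : ℝ} (hc : a ≤ c) (hcd : c ≤ d)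
    (hd : d ≤ b) : ENNReal.ofReal (lam * (d - c)) ≤ μ (Ioc c d) := by
  have hsub : Ioc c d ∩ Icc a b = Ioc c d :=
    inter_eq_self_of_subset_left fun x hx => ⟨hc.trans hx.1.le, hx.2.trans hd⟩
  rw [gm_apply h measurableSet_Ioc, hsub]
  calc ENNReal.ofReal (lam * (d - c)) = ENNReal.ofReal lam * volume (Ioc c d) := by
        rw [Real.volume_Ioc, ENNReal.ofReal_mul' (by linarith)]
    _ = ∫⁻ _ in Ioc c d, ENNReal.ofReal lam ∂volume := by rw [setLIntegral_const, mul_comm]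
    _ ≤ ∫⁻ x in Ioc c d, ENNReal.ofReal (u x) ∂volume := by
        refine setLIntegral_mono_ae' measurableSet_Ioc (ae_of_all _ fun x hx => ?_)
        exact ENNReal.ofReal_le_ofReal (h.2.2.2 x ⟨hc.trans hx.1.le, hx.2.trans hd⟩).1

lemma gm_atom (h : IsGoodMarginal μ u a b lam Lam) (c : ℝ) : μ {c} = 0 := by
  refine le_antisymm ?_ zero_le
  calc μ {c} ≤ ENNReal.ofReal Lam * volume ({c} ∩ Icc a b) := gm_le h (measurableSet_singleton c)
    _ ≤ ENNReal.ofReal Lam * volume ({c} : Set ℝ) := by gcongr; exact inter_subset_left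
    _ = 0 := by simp

lemma gm_compl (h : IsGoodMarginal μ u a b lam Lam) : μ (Icc a b)ᶜ = 0 := by
  refine le_antisymm ?_ zero_le
  have := gm_le h (measurableSet_Icc (a := a) (b := b)).compl
  simpa using this

lemma gm_finite (h : IsGoodMarginal μ u a b lam Lam) : IsFiniteMeasure μ := by
  haveI := h.1; infer_instance

/-- cdf basic lemmas -/
lemma cdf_nonneg (μ : Measure ℝ) (c : ℝ) : 0 ≤ cdf μ c := ENNReal.toReal_nonneg

lemma cdf_le_one (h : IsGoodMarginal μ u a b lam Lam) (c : ℝ) : cdf μ c ≤ 1 := by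
  haveI := h.1
  have := prob_le_one (μ := μ) (s := Iic c)
  simpa [cdf] using ENNReal.toReal_le_of_le_ofReal zero_le_one (by simpa using this)

lemma cdf_mono (h : IsGoodMarginal μ u a b lam Lam) : Monotone (cdf μ) := by
  haveI := h.1
  intro c d hcd
  exact ENNReal.toReal_mono (measure_ne_top μ _) (measure_mono (Iic_subset_Iic.2 hcd))

lemma cdf_ioc (h : IsGoodMarginal μ u a b lam Lam) {c d : ℝ} (hcd : c ≤ d) :
    (μ (Ioc c d)).toReal = cdf μ d - cdf μ c := by
  haveI := h.1
  have hu : Iic c ∪ Ioc c d = Iic d := Iic_union_Ioc_eq_Iic hcd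
  have hdisj : Disjoint (Iic c) (Ioc c d) := by
    simp [Set.disjoint_left]
    intro x hx h1 ; linarith
  have hsum : μ (Iic c) + μ (Ioc c d) = μ (Iic d) := by
    rw [← hu]; exact (measure_union hdisj measurableSet_Ioc).symm
  rw [cdf, cdf, ← hsum, ENNReal.toReal_add (measure_ne_top μ _) (measure_ne_top μ _)]
  ring

lemma cdf_lip (h : IsGoodMarginal μ u a b lam Lam) (hL : 0 ≤ Lam) {c d : ℝ} (hcd : c ≤ d) :
    cdf μ d - cdf μ c ≤ Lam * (d - c) := by
  rw [← cdf_ioc h hcd]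
  have h1 : μ (Ioc c d) ≤ ENNReal.ofReal Lam * volume (Ioc c d ∩ Icc a b) :=
    gm_le h measurableSet_Ioc
  have h2 : ENNReal.ofReal Lam * volume (Ioc c d ∩ Icc a b) ≤
      ENNReal.ofReal Lam * ENNReal.ofReal (d - c) := by
    gcongr
    calc volume (Ioc c d ∩ Icc a b) ≤ volume (Ioc c d) := measure_mono inter_subset_left
      _ = ENNReal.ofReal (d - c) := Real.volume_Ioc
  haveI := h.1
  calc (μ (Ioc c d)).toReal ≤ (ENNReal.ofReal Lam * ENNReal.ofReal (d - c)).toReal := by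
        refine ENNReal.toReal_mono (by finiteness) (h1.trans h2)
    _ = Lam * (d - c) := by
        rw [← ENNReal.ofReal_mul hL, ENNReal.toReal_ofReal (by nlinarith)]

lemma cdf_low (h : IsGoodMarginal μ u a b lam Lam) (hlam : 0 ≤ lam) {c d : ℝ} (hc : a ≤ c)
    (hcd : c ≤ d) (hd : d ≤ b) : lam * (d - c) ≤ cdf μ d - cdf μ c := by
  rw [← cdf_ioc h hcd]
  have hge := gm_ge h hc hcd hd
  haveI := h.1
  calc lam * (d - c) = (ENNReal.ofReal (lam * (d - c))).toReal := by
        rw [ENNReal.toReal_ofReal (by nlinarith)]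
    _ ≤ (μ (Ioc c d)).toReal := ENNReal.toReal_mono (measure_ne_top μ _) hge

lemma cdf_a (h : IsGoodMarginal μ u a b lam Lam) (hab : a ≤ b) : cdf μ a = 0 := by
  have : μ (Iic a) = 0 := by
    rw [gm_apply h measurableSet_Iic]
    have : Iic a ∩ Icc a b = {a} := by
      ext x; simp only [mem_inter_iff, mem_Iic, mem_Icc, mem_singleton_iff]
      constructor
      · rintro ⟨h1, h2, h3⟩; linarith
      · rintro rfl; exact ⟨le_rfl, le_rfl, hab⟩
    rw [this]
    refine le_antisymm ?_ zero_le
    calc ∫⁻ x in ({a} : Set ℝ), ENNReal.ofReal (u x) ∂volume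
        ≤ ∫⁻ _ in ({a} : Set ℝ), ⊤ ∂volume := setLIntegral_mono_ae' (measurableSet_singleton a)
          (ae_of_all _ fun x _ => le_top)
      _ = 0 := by simp
  simp [cdf, this]

lemma cdf_b (h : IsGoodMarginal μ u a b lam Lam) (hab : a ≤ b) : cdf μ b = 1 := by
  haveI := h.1
  have h1 : μ (Iic b)ᶜ = 0 := by
    refine measure_mono_null ?_ (gm_compl h)
    intro x hx
    simp only [mem_compl_iff, mem_Iic, not_le] at hx ⊢
    intro hmem
    exact absurd hmem.2 (not_le.2 hx)
  have : μ (Iic b) = 1 := by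
    have := measure_add_measure_compl (μ := μ) (s := Iic b) measurableSet_Iic
    rw [h1, add_zero] at this
    simpa using this
  simp [cdf, this]

lemma cdf_cont (h : IsGoodMarginal μ u a b lam Lam) (hL : 0 ≤ Lam) : Continuous (cdf μ) := by
  refine LipschitzWith.continuous (K := Real.toNNReal Lam) ?_
  refine LipschitzWith.of_dist_le_mul fun c d => ?_
  have hcoe : (Real.toNNReal Lam : ℝ) = Lam := Real.coe_toNNReal _ hL
  rw [Real.dist_eq, Real.dist_eq, hcoe]
  rcases le_total c d with hcd | hdc
  · have h1 := cdf_lip h hL hcd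
    have h2 := cdf_mono h hcd
    rw [abs_of_nonpos (by linarith), abs_of_nonpos (by linarith)]
    linarith
  · have h1 := cdf_lip h hL hdc
    have h2 := cdf_mono h hdc
    rw [abs_of_nonneg (by linarith), abs_of_nonneg (by linarith)]
    linarith

lemma cdf_quantile (h : IsGoodMarginal μ u a b lam Lam) (hab : a ≤ b) (hL : 0 ≤ Lam) {t : ℝ}
    (ht : t ∈ Icc (0:ℝ) 1) : ∃ q ∈ Icc a b, cdf μ q = t := by
  have := intermediate_value_Icc hab ((cdf_cont h hL).continuousOn (s := Icc a b))
  rw [cdf_a h hab, cdf_b h hab] at this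
  obtain ⟨q, hq, hq2⟩ := this ht
  exact ⟨q, hq, hq2⟩

lemma cdf_levelset (h : IsGoodMarginal μ u a b lam Lam) (hab : a ≤ b) (hlam : 0 < lam)
    (hL : 0 ≤ Lam) {s t : ℝ} (h0 : 0 ≤ s) (hst : s ≤ t) (h1 : t ≤ 1) :
    μ {y | cdf μ y ∈ Ioc s t} = ENNReal.ofReal (t - s) := by
  haveI := h.1
  obtain ⟨qs, hqs, hqs2⟩ := cdf_quantile h hab hL ⟨h0, hst.trans h1⟩
  obtain ⟨qt, hqt, hqt2⟩ := cdf_quantile h hab hL ⟨h0.trans hst, h1⟩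
  have hq : qs ≤ qt := by
    by_contra hc
    push_neg at hc
    have := cdf_low h hlam.le hqt.1 hc.le hqs.2
    nlinarith
  have hioc : Ioc qs qt ⊆ {y | cdf μ y ∈ Ioc s t} := by
    intro y hy
    have hyb : y ≤ b := hy.2.trans hqt.2
    have hlow := cdf_low h hlam.le hqs.1 hy.1.le hyb
    have hmono := cdf_mono h hy.2
    exact ⟨by nlinarith [hy.1], by rw [← hqt2]; exact hmono⟩
  have hsup : {y | cdf μ y ∈ Ioc s t} ⊆ Ioc qs qt ∪ Ioi b := by
    intro y hy
    have hy1 : qs < y := by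
      by_contra hc
      push_neg at hc
      have := cdf_mono h hc
      rw [hqs2] at this
      exact absurd hy.1 (not_lt.2 this)
    by_cases hy2 : y ≤ qt
    · exact Or.inl ⟨hy1, hy2⟩
    · push_neg at hy2
      right
      by_contra hc
      simp only [mem_Ioi, not_lt] at hc
      have := cdf_low h hlam.le hqt.1 hy2.le hc
      rw [hqt2] at this
      have := hy.2
      nlinarith
  have hIocval : μ (Ioc qs qt) = ENNReal.ofReal (t - s) := by
    have h2 := cdf_ioc h hq
    rw [hqs2, hqt2] at h2
    rw [← h2, ENNReal.ofReal_toReal (measure_ne_top μ _)]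
  have hb0 : μ (Ioi b) = 0 := by
    refine measure_mono_null ?_ (gm_compl h)
    intro y hy hmem
    exact absurd hmem.2 (not_le.2 hy)
  refine le_antisymm ?_ (hIocval ▸ measure_mono hioc)
  calc μ {y | cdf μ y ∈ Ioc s t} ≤ μ (Ioc qs qt ∪ Ioi b) := measure_mono hsup
    _ ≤ μ (Ioc qs qt) + μ (Ioi b) := measure_union_le _ _
    _ = ENNReal.ofReal (t - s) := by rw [hIocval, hb0, add_zero]

lemma cdf_strict (h : IsGoodMarginal μ u a b lam Lam) (hlam : 0 < lam) {c d : ℝ}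
    (hc : a ≤ c) (hcd : c < d) (hd : d ≤ b) : cdf μ c < cdf μ d := by
  have := cdf_low h hlam.le hc hcd.le hd
  nlinarith

section Monge

variable {μ₀ μ₁ : Measure ℝ} {u₀ u₁ : ℝ → ℝ} {a₀ b₀ a₁ b₁ : ℝ} {T₀ : ℝ → ℝ}

lemma monge_cdf (h₀ : IsGoodMarginal μ₀ u₀ a₀ b₀ lam Lam) (h₁ : IsGoodMarginal μ₁ u₁ a₁ b₁ lam Lam)
    (hT : IsMongeMap μ₀ μ₁ T₀) (x : ℝ) : cdf μ₁ (T₀ x) = cdf μ₀ x := by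
  have hmeas := hT.1.measurable
  have hmap : ∀ s : Set ℝ, MeasurableSet s → μ₁ s = μ₀ (T₀ ⁻¹' s) := by
    intro s hs
    rw [← hT.2, Measure.map_apply hmeas hs]
  have hnull : μ₀ (T₀ ⁻¹' {T₀ x}) = 0 := by
    rw [← hmap _ (measurableSet_singleton _)]
    exact gm_atom h₁ _
  have hsub1 : Iic x ⊆ T₀ ⁻¹' Iic (T₀ x) := fun z hz => hT.1 hz
  have hsub2 : T₀ ⁻¹' Iic (T₀ x) ⊆ Iic x ∪ T₀ ⁻¹' {T₀ x} := by
    intro z hz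
    rcases le_or_gt z x with hzx | hxz
    · exact Or.inl hzx
    · exact Or.inr (le_antisymm hz (hT.1 hxz.le))
  have hkey : μ₀ (T₀ ⁻¹' Iic (T₀ x)) = μ₀ (Iic x) := by
    refine le_antisymm ?_ (measure_mono hsub1)
    calc μ₀ (T₀ ⁻¹' Iic (T₀ x)) ≤ μ₀ (Iic x ∪ T₀ ⁻¹' {T₀ x}) := measure_mono hsub2
      _ ≤ μ₀ (Iic x) + μ₀ (T₀ ⁻¹' {T₀ x}) := measure_union_le _ _
      _ = μ₀ (Iic x) := by rw [hnull, add_zero]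
  unfold cdf
  rw [hmap _ measurableSet_Iic, hkey]

lemma monge_mem (h₀ : IsGoodMarginal μ₀ u₀ a₀ b₀ lam Lam) (h₁ : IsGoodMarginal μ₁ u₁ a₁ b₁ lam Lam)
    (hT : IsMongeMap μ₀ μ₁ T₀) (hab₀ : a₀ < b₀) (hab₁ : a₁ < b₁) (hlam : 0 < lam)
    {x : ℝ} (hx : x ∈ Ioo a₀ b₀) : T₀ x ∈ Ioo a₁ b₁ := by
  have hc := monge_cdf h₀ h₁ hT x
  have h0x : 0 < cdf μ₀ x := by
    have := cdf_strict h₀ hlam le_rfl hx.1 hx.2.le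
    rwa [cdf_a h₀ hab₀.le] at this
  have hx1 : cdf μ₀ x < 1 := by
    have := cdf_strict h₀ hlam hx.1.le hx.2 le_rfl
    rwa [cdf_b h₀ hab₀.le] at this
  constructor
  · by_contra hc2
    push_neg at hc2
    have := cdf_mono h₁ hc2
    rw [hc, cdf_a h₁ hab₁.le] at this
    linarith
  · by_contra hc2
    push_neg at hc2
    have := cdf_mono h₁ hc2
    rw [hc, cdf_b h₁ hab₁.le] at this
    linarith

lemma monge_lip (h₀ : IsGoodMarginal μ₀ u₀ a₀ b₀ lam Lam) (h₁ : IsGoodMarginal μ₁ u₁ a₁ b₁ lam Lam)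
    (hT : IsMongeMap μ₀ μ₁ T₀) (hab₀ : a₀ < b₀) (hab₁ : a₁ < b₁) (hlam : 0 < lam) (hL : 0 ≤ Lam)
    {x x' : ℝ} (hx : x ∈ Ioo a₀ b₀) (hx' : x' ∈ Ioo a₀ b₀) (hxx : x ≤ x') :
    lam * (T₀ x' - T₀ x) ≤ Lam * (x' - x) := by
  have hm := monge_mem h₀ h₁ hT hab₀ hab₁ hlam hx
  have hm' := monge_mem h₀ h₁ hT hab₀ hab₁ hlam hx'
  have hTm : T₀ x ≤ T₀ x' := hT.1 hxx
  have h1 := cdf_low h₁ hlam.le hm.1.le hTm hm'.2.le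
  have h2 := cdf_lip h₀ hL hxx
  rw [monge_cdf h₀ h₁ hT, monge_cdf h₀ h₁ hT] at h1
  linarith

lemma monge_surj (h₀ : IsGoodMarginal μ₀ u₀ a₀ b₀ lam Lam) (h₁ : IsGoodMarginal μ₁ u₁ a₁ b₁ lam Lam)
    (hT : IsMongeMap μ₀ μ₁ T₀) (hab₀ : a₀ < b₀) (hab₁ : a₁ < b₁) (hlam : 0 < lam) (hL : 0 ≤ Lam)
    {y : ℝ} (hy : y ∈ Ioo a₁ b₁) : ∃ x ∈ Ioo a₀ b₀, T₀ x = y := by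
  have h0y : 0 < cdf μ₁ y := by
    have := cdf_strict h₁ hlam le_rfl hy.1 hy.2.le
    rwa [cdf_a h₁ hab₁.le] at this
  have hy1 : cdf μ₁ y < 1 := by
    have := cdf_strict h₁ hlam hy.1.le hy.2 le_rfl
    rwa [cdf_b h₁ hab₁.le] at this
  obtain ⟨q, hq, hq2⟩ := cdf_quantile h₀ hab₀.le hL ⟨h0y.le, hy1.le⟩
  have hqa : a₀ < q := by
    rcases eq_or_lt_of_le hq.1 with rfl | h
    · rw [cdf_a h₀ hab₀.le] at hq2; linarith
    · exact h
  have hqb : q < b₀ := by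
    rcases eq_or_lt_of_le hq.2 with rfl | h
    · rw [cdf_b h₀ hab₀.le] at hq2; linarith
    · exact h
  refine ⟨q, ⟨hqa, hqb⟩, ?_⟩
  have hcq : cdf μ₁ (T₀ q) = cdf μ₁ y := by rw [monge_cdf h₀ h₁ hT, hq2]
  have hTq := monge_mem h₀ h₁ hT hab₀ hab₁ hlam ⟨hqa, hqb⟩
  rcases lt_trichotomy (T₀ q) y with hlt | heq | hgt
  · have := cdf_strict h₁ hlam hTq.1.le hlt hy.2.le
    linarith
  · exact heq
  · have := cdf_strict h₁ hlam hy.1.le hgt hTq.2.le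
    linarith

end Monge

section Conj

variable {a₀ b₀ a₁ b₁ : ℝ} {f₀ T₀ : ℝ → ℝ} {μ₀ μ₁ : Measure ℝ} {u₀ u₁ : ℝ → ℝ}

lemma subgrad (hcv : ConvexOn ℝ (Icc a₀ b₀) f₀)
    (hder : ∀ x ∈ Icc a₀ b₀, HasDerivWithinAt f₀ (T₀ x) (Icc a₀ b₀) x)
    {x z : ℝ} (hx : x ∈ Icc a₀ b₀) (hz : z ∈ Icc a₀ b₀) :
    f₀ x + T₀ x * (z - x) ≤ f₀ z := by
  rcases lt_trichotomy x z with hlt | heq | hgt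
  · have hs := hcv.le_slope_of_hasDerivWithinAt hx hz hlt (hder x hx)
    rw [slope_def_field] at hs
    have hzx : 0 < z - x := by linarith
    rw [le_div_iff₀ hzx] at hs
    linarith
  · simp [heq]
  · have hs := hcv.slope_le_of_hasDerivWithinAt hz hx hgt (hder x hx)
    rw [slope_def_field] at hs
    have hzx : 0 < x - z := by linarith
    rw [div_le_iff₀ hzx] at hs
    nlinarith
  
lemma f0_contOn (hder : ∀ x ∈ Icc a₀ b₀, HasDerivWithinAt f₀ (T₀ x) (Icc a₀ b₀) x) :
    ContinuousOn f₀ (Icc a₀ b₀) := fun x hx => (hder x hx).continuousWithinAt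

lemma conj_bdd (hcont : ContinuousOn f₀ (Icc a₀ b₀)) (y : ℝ) :
    BddAbove ((fun x => x * y - f₀ x) '' Icc a₀ b₀) := by
  refine (isCompact_Icc.image_of_continuousOn ?_).bddAbove
  exact (continuousOn_id.mul continuousOn_const).sub hcont

lemma conj_ge (hcont : ContinuousOn f₀ (Icc a₀ b₀)) {x y : ℝ} (hx : x ∈ Icc a₀ b₀) :
    x * y - f₀ x ≤ conjOn f₀ a₀ b₀ y :=
  le_csSup (conj_bdd hcont y) (mem_image_of_mem _ hx)

lemma conj_eq (hcv : ConvexOn ℝ (Icc a₀ b₀) f₀)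
    (hder : ∀ x ∈ Icc a₀ b₀, HasDerivWithinAt f₀ (T₀ x) (Icc a₀ b₀) x)
    {x' : ℝ} (hx' : x' ∈ Icc a₀ b₀) :
    conjOn f₀ a₀ b₀ (T₀ x') = x' * T₀ x' - f₀ x' := by
  refine le_antisymm ?_ (conj_ge (f0_contOn hder) hx')
  refine csSup_le ((Set.nonempty_of_mem hx').image _) ?_
  rintro _ ⟨z, hz, rfl⟩
  have := subgrad hcv hder hx' hz
  dsimp only
  nlinarith

lemma conj_lip_oneside (hcont : ContinuousOn f₀ (Icc a₀ b₀)) (hab₀ : a₀ ≤ b₀) (y y' : ℝ) :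
    conjOn f₀ a₀ b₀ y ≤ conjOn f₀ a₀ b₀ y' + max |a₀| |b₀| * |y - y'| := by
  refine csSup_le ((nonempty_Icc.mpr hab₀).image _) ?_
  rintro _ ⟨z, hz, rfl⟩
  have h1 : z * y' - f₀ z ≤ conjOn f₀ a₀ b₀ y' := conj_ge hcont hz
  have h2 : z * (y - y') ≤ max |a₀| |b₀| * |y - y'| := by
    calc z * (y - y') ≤ |z * (y - y')| := le_abs_self _
      _ = |z| * |y - y'| := abs_mul _ _
      _ ≤ max |a₀| |b₀| * |y - y'| := by
          refine mul_le_mul_of_nonneg_right ?_ (abs_nonneg _)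
          exact abs_le_max_abs_abs hz.1 hz.2
  dsimp only
  nlinarith

lemma conj_cont (hcont : ContinuousOn f₀ (Icc a₀ b₀)) (hab₀ : a₀ ≤ b₀) :
    Continuous (conjOn f₀ a₀ b₀) := by
  refine LipschitzWith.continuous (K := Real.toNNReal (max |a₀| |b₀|)) ?_
  refine LipschitzWith.of_dist_le_mul fun c d => ?_
  have hcoe : (Real.toNNReal (max |a₀| |b₀|) : ℝ) = max |a₀| |b₀| :=
    Real.coe_toNNReal _ (le_trans (abs_nonneg _) (le_max_left _ _))
  rw [Real.dist_eq, Real.dist_eq, hcoe]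
  have h1 := conj_lip_oneside hcont hab₀ c d
  have h2 := conj_lip_oneside hcont hab₀ d c
  rw [abs_sub_comm d c] at h2
  rw [abs_le]
  constructor <;> nlinarith

lemma key_quad {lam Lam : ℝ} (h₀ : IsGoodMarginal μ₀ u₀ a₀ b₀ lam Lam)
    (h₁ : IsGoodMarginal μ₁ u₁ a₁ b₁ lam Lam)
    (hT : IsMongeMap μ₀ μ₁ T₀) (hab₀ : a₀ < b₀) (hab₁ : a₁ < b₁) (hlam : 0 < lam) (hL : 0 ≤ Lam)
    (hcv : ConvexOn ℝ (Icc a₀ b₀) f₀)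
    (hder : ∀ x ∈ Icc a₀ b₀, HasDerivWithinAt f₀ (T₀ x) (Icc a₀ b₀) x)
    {x y m : ℝ} (hx : x ∈ Ioo a₀ b₀) (hy : y ∈ Ioo a₁ b₁)
    (hm : |cdf μ₀ x - cdf μ₁ y| ≤ m) :
    lam ^ 3 * (f₀ x + conjOn f₀ a₀ b₀ y - x * y) ≤ Lam * m ^ 2 := by
  obtain ⟨x', hx', hTx'⟩ := monge_surj h₀ h₁ hT hab₀ hab₁ hlam hL hy
  have hx'I : x' ∈ Icc a₀ b₀ := Ioo_subset_Icc_self hx'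
  have hxI : x ∈ Icc a₀ b₀ := Ioo_subset_Icc_self hx
  have hconj : conjOn f₀ a₀ b₀ y = x' * y - f₀ x' := by
    rw [← hTx']; rw [conj_eq hcv hder hx'I, hTx']
  have hsub := subgrad hcv hder hxI hx'I
  have hkey1 : f₀ x + conjOn f₀ a₀ b₀ y - x * y ≤ (T₀ x - T₀ x') * (x - x') := by
    rw [hconj, ← hTx']
    nlinarith
  have hcdf' : cdf μ₀ x' = cdf μ₁ y := by rw [← hTx', monge_cdf h₀ h₁ hT]
  have hdist : lam * |x - x'| ≤ m := by
    rcases le_total x x' with hxx | hxx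
    · have := cdf_low h₀ hlam.le hx.1.le hxx hx'.2.le
      rw [abs_of_nonpos (by linarith)]
      rw [abs_le] at hm
      rw [hcdf'] at *
      nlinarith [hm.1]
    · have := cdf_low h₀ hlam.le hx'.1.le hxx hx.2.le
      rw [abs_of_nonneg (by linarith)]
      rw [abs_le] at hm
      rw [hcdf'] at *
      nlinarith [hm.2]
  have hlip : lam * ((T₀ x - T₀ x') * (x - x')) ≤ Lam * (x - x') ^ 2 := by
    rcases le_total x' x with hxx | hxx
    · have := monge_lip h₀ h₁ hT hab₀ hab₁ hlam hL hx' hx hxx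
      have hmono : T₀ x' ≤ T₀ x := hT.1 hxx
      nlinarith
    · have := monge_lip h₀ h₁ hT hab₀ hab₁ hlam hL hx hx' hxx
      have hmono : T₀ x ≤ T₀ x' := hT.1 hxx
      nlinarith
  have hm0 : 0 ≤ m := le_trans (abs_nonneg _) hm
  have h2 : lam ^ 2 * (x - x') ^ 2 ≤ m ^ 2 := by
    have := mul_le_mul hdist hdist (by positivity) hm0
    nlinarith [sq_abs (x - x')]
  nlinarith [sq_nonneg (x-x'), mul_le_mul_of_nonneg_left hkey1 (mul_pos hlam (mul_pos hlam hlam)).le]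

end Conj

set_option maxHeartbeats 2000000 in
theorem stmt19
    (a₀ b₀ a₁ b₁ lam Lam : ℝ) (μ₀ μ₁ : Measure ℝ) (u₀ u₁ : ℝ → ℝ)
    (hab₀ : a₀ < b₀) (hab₁ : a₁ < b₁) (hlam : 0 < lam)
    (hμ₀ : IsGoodMarginal μ₀ u₀ a₀ b₀ lam Lam)
    (hμ₁ : IsGoodMarginal μ₁ u₁ a₁ b₁ lam Lam) :
    ∃ C > 0, ∃ ε₀ > 0, ∀ ε : ℝ, 0 < ε → ε < ε₀ →
      ∀ f g T₀ f₀ : ℝ → ℝ,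
        IsPotentialPair μ₀ μ₁ a₀ b₀ a₁ b₁ ε f g →
        IsMongeMap μ₀ μ₁ T₀ →
        ConvexOn ℝ (Icc a₀ b₀) f₀ →
        (∀ x ∈ Icc a₀ b₀, HasDerivWithinAt f₀ (T₀ x) (Icc a₀ b₀) x) →
        (∫ x in Icc a₀ b₀, f x ∂μ₀) = (∫ y in Icc a₁ b₁, g y ∂μ₁) →
        (∫ x in Icc a₀ b₀, f₀ x ∂μ₀) = (∫ y in Icc a₁ b₁, conjOn f₀ a₀ b₀ y ∂μ₁) →
        |∫ x in Icc a₀ b₀, (f x - f₀ x) ∂μ₀| ≤ C * ε ^ ((2 : ℝ) / 3) := by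
  have hL : 0 < Lam := by
    have h1 := (hμ₀.2.2.2 a₀ ⟨le_rfl, hab₀.le⟩).1
    have h2 := (hμ₀.2.2.2 a₀ ⟨le_rfl, hab₀.le⟩).2
    linarith
  refine ⟨Lam / lam ^ 3 + 1, by positivity, 1, one_pos, ?_⟩
  intro ε hε hε1 f g T₀ f₀ pot monge hcv hder hnormf hnormf₀
  haveI := hμ₀.1
  haveI := hμ₁.1
  -- extensions
  obtain ⟨Kf, hKf⟩ := pot.1
  obtain ⟨fe, hfelip, hfeeq⟩ := hKf.extend_real
  obtain ⟨Kg, hKg⟩ := pot.2.1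
  obtain ⟨ge, hgelip, hgeeq⟩ := hKg.extend_real
  have hf₀lipOn : ∃ f₀e : ℝ → ℝ, Continuous f₀e ∧ EqOn f₀ f₀e (Icc a₀ b₀) := by
    have hbnd : ∀ x ∈ Icc a₀ b₀, |T₀ x| ≤ max |T₀ a₀| |T₀ b₀| := fun x hx =>
      abs_le_max_abs_abs (monge.1 hx.1) (monge.1 hx.2)
    have hlip : LipschitzOnWith (Real.toNNReal (max |T₀ a₀| |T₀ b₀|)) f₀ (Icc a₀ b₀) := by
      refine LipschitzOnWith.of_dist_le_mul fun x hx z hz => ?_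
      have h1 := subgrad hcv hder hx hz
      have h2 := subgrad hcv hder hz hx
      rw [Real.dist_eq, Real.dist_eq, Real.coe_toNNReal _ (le_trans (abs_nonneg _)
        (le_max_left _ _))]
      have hb1 := hbnd x hx
      have hb2 := hbnd z hz
      rw [abs_le]
      have hTx := abs_le.1 hb1
      have hTz := abs_le.1 hb2
      set M := max |T₀ a₀| |T₀ b₀| with hM
      rcases le_total x z with hxz | hzx
      · rw [abs_of_nonpos (show x - z ≤ 0 by linarith)]
        have p1 : 0 ≤ (M + T₀ x) * (z - x) := mul_nonneg (by linarith [hTx.1]) (by linarith)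
        have p2 : 0 ≤ (M - T₀ z) * (z - x) := mul_nonneg (by linarith [hTz.2]) (by linarith)
        constructor <;> nlinarith
      · rw [abs_of_nonneg (show 0 ≤ x - z by linarith)]
        have p1 : 0 ≤ (M + T₀ z) * (x - z) := mul_nonneg (by linarith [hTz.1]) (by linarith)
        have p2 : 0 ≤ (M - T₀ x) * (x - z) := mul_nonneg (by linarith [hTx.2]) (by linarith)
        constructor <;> nlinarith
    obtain ⟨h, hh, hhe⟩ := hlip.extend_real
    exact ⟨h, hh.continuous, hhe⟩
  obtain ⟨f₀e, hf₀cont, hf₀eq⟩ := hf₀lipOn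
  set g₀ : ℝ → ℝ := conjOn f₀ a₀ b₀ with hg₀def
  have hg₀cont : Continuous g₀ := conj_cont (f0_contOn hder) hab₀.le
  -- the coupling-density objects
  set K : ℕ := ⌈ε ^ (-(1:ℝ)/3)⌉₊ with hKdef
  have hK0 : 0 < K := Nat.ceil_pos.2 (Real.rpow_pos_of_pos hε _)
  have hKR : (0:ℝ) < K := by exact_mod_cast hK0
  set Φe : ℝ × ℝ → ℝ := fun z => max (z.1 * z.2 - fe z.1 - ge z.2) 0 with hΦdef
  have hΦcont : Continuous Φe := by
    apply Continuous.max ?_ continuous_const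
    exact ((continuous_fst.mul continuous_snd).sub
      (hfelip.continuous.comp continuous_fst)).sub (hgelip.continuous.comp continuous_snd)
  have hΦnn : ∀ z, 0 ≤ Φe z := fun z => le_max_right _ _
  set r : ℝ × ℝ → ℝ :=
    fun z => if ⌈(K:ℝ) * cdf μ₀ z.1⌉ = ⌈(K:ℝ) * cdf μ₁ z.2⌉ then (K:ℝ) else 0 with hrdef
  have hrmeas : Measurable r := by
    refine Measurable.ite ?_ measurable_const measurable_const
    exact measurableSet_eq_fun
      (((cdf_cont hμ₀ hL.le).measurable.comp measurable_fst).const_mul _).ceil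
      (((cdf_cont hμ₁ hL.le).measurable.comp measurable_snd).const_mul _).ceil
  have hrnn : ∀ z, 0 ≤ r z := by
    intro z; rw [hrdef]; dsimp only; split <;> simp [hKR.le]
  have hrle : ∀ z, r z ≤ (K : ℝ) := by
    intro z; rw [hrdef]; dsimp only; split <;> simp [hKR.le]
  have hrsq : ∀ z, r z ^ 2 = (K : ℝ) * r z := by
    intro z; rw [hrdef]; dsimp only; split <;> ring
  set P : Measure (ℝ × ℝ) := (μ₀.restrict (Icc a₀ b₀)).prod (μ₁.restrict (Icc a₁ b₁)) with hPdef
  haveI : IsFiniteMeasure P := by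
    rw [hPdef]; infer_instance
  -- bounds on the compact rectangle
  obtain ⟨Bf, hBf⟩ := (isCompact_Icc (a := a₀) (b := b₀)).exists_bound_of_continuousOn
      hfelip.continuous.continuousOn
  obtain ⟨Bg, hBg⟩ := (isCompact_Icc (a := a₁) (b := b₁)).exists_bound_of_continuousOn
      hgelip.continuous.continuousOn
  obtain ⟨Bf₀, hBf₀⟩ := (isCompact_Icc (a := a₀) (b := b₀)).exists_bound_of_continuousOn
      hf₀cont.continuousOn
  obtain ⟨Bg₀, hBg₀⟩ := (isCompact_Icc (a := a₁) (b := b₁)).exists_bound_of_continuousOn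
      hg₀cont.continuousOn
  obtain ⟨BΦ, hBΦ⟩ := ((isCompact_Icc (a := a₀) (b := b₀)).prod
      (isCompact_Icc (a := a₁) (b := b₁))).exists_bound_of_continuousOn hΦcont.continuousOn
  -- integrability helper
  have hInt : ∀ φ : ℝ × ℝ → ℝ, Measurable φ →
      (∃ C, ∀ z ∈ (Icc a₀ b₀) ×ˢ (Icc a₁ b₁), |φ z| ≤ C) → Integrable φ P := by
    rintro φ hφ ⟨C, hC⟩
    rw [hPdef, Measure.prod_restrict]
    refine Integrable.mono' (integrable_const C) hφ.aestronglyMeasurable ?_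
    filter_upwards [ae_restrict_mem (measurableSet_Icc.prod measurableSet_Icc)] with z hz
    simpa [Real.norm_eq_abs] using hC z hz
  -- marginal evaluation against Φe, first coordinate
  have hEX : ∀ φ : ℝ → ℝ, Integrable (fun z : ℝ × ℝ => φ z.1 * Φe z) P →
      ∫ z, φ z.1 * Φe z ∂P = ε * ∫ x in Icc a₀ b₀, φ x ∂μ₀ := by
    intro φ hintφ
    rw [hPdef] at hintφ ⊢
    rw [MeasureTheory.integral_prod _ hintφ]
    have hae : ∀ᵐ x ∂(μ₀.restrict (Icc a₀ b₀)),
        (∫ y, φ x * Φe (x, y) ∂(μ₁.restrict (Icc a₁ b₁))) = φ x * ε := by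
      filter_upwards [ae_restrict_mem measurableSet_Icc] with x hx
      rw [integral_const_mul]
      congr 1
      have heq : EqOn (fun y => Φe (x, y)) (fun y => max (x * y - f x - g y) 0) (Icc a₁ b₁) := by
        intro y hy
        simp only [hΦdef]
        rw [← hfeeq hx, ← hgeeq hy]
      rw [setIntegral_congr_fun measurableSet_Icc heq]
      exact pot.2.2.1 x hx
    rw [integral_congr_ae hae, integral_mul_const]
    ring
  -- marginal evaluation against Φe, second coordinate
  have hEY : ∀ ψ : ℝ → ℝ, Integrable (fun z : ℝ × ℝ => ψ z.2 * Φe z) P →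
      ∫ z, ψ z.2 * Φe z ∂P = ε * ∫ y in Icc a₁ b₁, ψ y ∂μ₁ := by
    intro ψ hintψ
    rw [hPdef] at hintψ ⊢
    rw [MeasureTheory.integral_prod_symm _ hintψ]
    have hae : ∀ᵐ y ∂(μ₁.restrict (Icc a₁ b₁)),
        (∫ x, ψ y * Φe (x, y) ∂(μ₀.restrict (Icc a₀ b₀))) = ψ y * ε := by
      filter_upwards [ae_restrict_mem measurableSet_Icc] with y hy
      rw [integral_const_mul]
      congr 1
      have heq : EqOn (fun x => Φe (x, y)) (fun x => max (x * y - f x - g y) 0) (Icc a₀ b₀) := by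
        intro x hx
        simp only [hΦdef]
        rw [← hfeeq hx, ← hgeeq hy]
      rw [setIntegral_congr_fun measurableSet_Icc heq]
      exact pot.2.2.2 y hy
    rw [integral_congr_ae hae, integral_mul_const]
    ring
  -- level sets of the cdf have the expected measure
  have hlevel : ∀ (ν : Measure ℝ) (u' : ℝ → ℝ) (a b : ℝ), IsGoodMarginal ν u' a b lam Lam →
      a ≤ b → ∀ j : ℤ, 1 ≤ j → (j : ℝ) ≤ (K : ℝ) →
      ν {y | ⌈(K : ℝ) * cdf ν y⌉ = j} = ENNReal.ofReal (1 / (K : ℝ)) := by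
    intro ν u' a b hν hab j hj1 hjK
    have hseteq : {y | ⌈(K : ℝ) * cdf ν y⌉ = j} =
        {y | cdf ν y ∈ Ioc (((j : ℝ) - 1) / K) ((j : ℝ) / K)} := by
      ext y
      simp only [mem_setOf_eq, mem_Ioc, Int.ceil_eq_iff, div_lt_iff₀ hKR, le_div_iff₀ hKR]
      constructor
      · rintro ⟨h1, h2⟩
        constructor <;> nlinarith
      · rintro ⟨h1, h2⟩
        constructor <;> nlinarith
    rw [hseteq, cdf_levelset hν hab hlam hL.le
      (div_nonneg (by exact_mod_cast sub_nonneg.2 (show (1:ℝ) ≤ (j:ℝ) by exact_mod_cast hj1)) hKR.le)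
      (by rw [div_le_div_iff₀ hKR hKR]; nlinarith) (by rw [div_le_one hKR]; exact hjK)]
    congr 1
    field_simp
    ring
  -- a.e. point of the restricted measure is interior
  have hae₀ : ∀ᵐ x ∂(μ₀.restrict (Icc a₀ b₀)), x ∈ Ioo a₀ b₀ := by
    have hnull : (μ₀.restrict (Icc a₀ b₀)) ({a₀} ∪ {b₀} : Set ℝ) = 0 := by
      refine le_antisymm (le_trans (Measure.restrict_le_self _) ?_) zero_le
      exact (measure_union_null (gm_atom hμ₀ _) (gm_atom hμ₀ _)).le
    filter_upwards [ae_restrict_mem measurableSet_Icc, measure_eq_zero_iff_ae_notMem.1 hnull]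
      with x hx hnx
    simp only [union_singleton, mem_insert_iff, mem_singleton_iff, not_or] at hnx
    exact ⟨lt_of_le_of_ne hx.1 (Ne.symm hnx.2), lt_of_le_of_ne hx.2 hnx.1⟩
  have hae₁ : ∀ᵐ y ∂(μ₁.restrict (Icc a₁ b₁)), y ∈ Ioo a₁ b₁ := by
    have hnull : (μ₁.restrict (Icc a₁ b₁)) ({a₁} ∪ {b₁} : Set ℝ) = 0 := by
      refine le_antisymm (le_trans (Measure.restrict_le_self _) ?_) zero_le
      exact (measure_union_null (gm_atom hμ₁ _) (gm_atom hμ₁ _)).le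
    filter_upwards [ae_restrict_mem measurableSet_Icc, measure_eq_zero_iff_ae_notMem.1 hnull]
      with y hy hny
    simp only [union_singleton, mem_insert_iff, mem_singleton_iff, not_or] at hny
    exact ⟨lt_of_le_of_ne hy.1 (Ne.symm hny.2), lt_of_le_of_ne hy.2 hny.1⟩
  -- ceiling index bounds for interior points
  have hjbound : ∀ (ν : Measure ℝ) (u' : ℝ → ℝ) (a b : ℝ), IsGoodMarginal ν u' a b lam Lam →
      a < b → ∀ w : ℝ, w ∈ Ioo a b →
      1 ≤ ⌈(K : ℝ) * cdf ν w⌉ ∧ ((⌈(K : ℝ) * cdf ν w⌉ : ℝ) ≤ (K : ℝ)) := by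
    intro ν u' a b hν hab w hw
    have hpos : 0 < cdf ν w := by
      have := cdf_strict hν hlam le_rfl hw.1 hw.2.le
      rwa [cdf_a hν hab.le] at this
    constructor
    · exact Int.ceil_pos.2 (by positivity)
    · have h1 : (K : ℝ) * cdf ν w ≤ ((K : ℤ) : ℝ) := by
        push_cast
        nlinarith [cdf_le_one hν w]
      exact_mod_cast Int.ceil_le.2 h1
  -- the measure of an r-slice in y, for interior x
  have hslice₁ : ∀ x ∈ Ioo a₀ b₀,
      ∫ y, r (x, y) ∂(μ₁.restrict (Icc a₁ b₁)) = 1 := by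
    intro x hx
    set j : ℤ := ⌈(K : ℝ) * cdf μ₀ x⌉ with hjdef
    obtain ⟨hj1, hjK⟩ := hjbound μ₀ u₀ a₀ b₀ hμ₀ hab₀ x hx
    have hSmeas : MeasurableSet {y : ℝ | ⌈(K : ℝ) * cdf μ₁ y⌉ = j} :=
      (((cdf_cont hμ₁ hL.le).measurable.const_mul _).ceil) (measurableSet_singleton j)
    have hr : (fun y => r (x, y)) =
        Set.indicator {y : ℝ | ⌈(K : ℝ) * cdf μ₁ y⌉ = j} (fun _ => (K : ℝ)) := by
      funext y
      rw [hrdef, Set.indicator_apply]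
      simp only [mem_setOf_eq]
      by_cases hc : ⌈(K : ℝ) * cdf μ₀ x⌉ = ⌈(K : ℝ) * cdf μ₁ y⌉
      · simp [hjdef, hc]
      · simp [hjdef, hc, Ne.symm hc]
    rw [hr, integral_indicator hSmeas, setIntegral_const, smul_eq_mul]
    have hres : (μ₁.restrict (Icc a₁ b₁)) {y : ℝ | ⌈(K : ℝ) * cdf μ₁ y⌉ = j} =
        ENNReal.ofReal (1 / (K : ℝ)) := by
      rw [Measure.restrict_apply hSmeas]
      have hdiff : μ₁ ({y : ℝ | ⌈(K : ℝ) * cdf μ₁ y⌉ = j} \ Icc a₁ b₁) = 0 :=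
        measure_mono_null (diff_subset_compl _ _) (gm_compl hμ₁)
      have := measure_inter_add_diff {y : ℝ | ⌈(K : ℝ) * cdf μ₁ y⌉ = j}
        (measurableSet_Icc (a := a₁) (b := b₁)) (μ := μ₁)
      rw [hdiff, add_zero] at this
      rw [this, hlevel μ₁ u₁ a₁ b₁ hμ₁ hab₁.le j hj1 hjK]
    rw [measureReal_def, hres, ENNReal.toReal_ofReal (by positivity)]
    field_simp
  have hslice₀ : ∀ y ∈ Ioo a₁ b₁,
      ∫ x, r (x, y) ∂(μ₀.restrict (Icc a₀ b₀)) = 1 := by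
    intro y hy
    set j : ℤ := ⌈(K : ℝ) * cdf μ₁ y⌉ with hjdef
    obtain ⟨hj1, hjK⟩ := hjbound μ₁ u₁ a₁ b₁ hμ₁ hab₁ y hy
    have hSmeas : MeasurableSet {x : ℝ | ⌈(K : ℝ) * cdf μ₀ x⌉ = j} :=
      (((cdf_cont hμ₀ hL.le).measurable.const_mul _).ceil) (measurableSet_singleton j)
    have hr : (fun x => r (x, y)) =
        Set.indicator {x : ℝ | ⌈(K : ℝ) * cdf μ₀ x⌉ = j} (fun _ => (K : ℝ)) := by
      funext x
      rw [hrdef]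
      simp only [Set.indicator_apply, mem_setOf_eq, hjdef]
    rw [hr, integral_indicator hSmeas, setIntegral_const, smul_eq_mul]
    have hres : (μ₀.restrict (Icc a₀ b₀)) {x : ℝ | ⌈(K : ℝ) * cdf μ₀ x⌉ = j} =
        ENNReal.ofReal (1 / (K : ℝ)) := by
      rw [Measure.restrict_apply hSmeas]
      have hdiff : μ₀ ({x : ℝ | ⌈(K : ℝ) * cdf μ₀ x⌉ = j} \ Icc a₀ b₀) = 0 :=
        measure_mono_null (diff_subset_compl _ _) (gm_compl hμ₀)
      have := measure_inter_add_diff {x : ℝ | ⌈(K : ℝ) * cdf μ₀ x⌉ = j}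
        (measurableSet_Icc (a := a₀) (b := b₀)) (μ := μ₀)
      rw [hdiff, add_zero] at this
      rw [this, hlevel μ₀ u₀ a₀ b₀ hμ₀ hab₀.le j hj1 hjK]
    rw [measureReal_def, hres, ENNReal.toReal_ofReal (by positivity)]
    field_simp
  -- marginal evaluations against r
  have hMX : ∀ φ : ℝ → ℝ, Integrable (fun z : ℝ × ℝ => φ z.1 * r z) P →
      ∫ z, φ z.1 * r z ∂P = ∫ x in Icc a₀ b₀, φ x ∂μ₀ := by
    intro φ hintφ
    rw [hPdef] at hintφ ⊢
    rw [MeasureTheory.integral_prod _ hintφ]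
    refine integral_congr_ae ?_
    filter_upwards [hae₀] with x hx
    rw [integral_const_mul, hslice₁ x hx, mul_one]
  have hMY : ∀ ψ : ℝ → ℝ, Integrable (fun z : ℝ × ℝ => ψ z.2 * r z) P →
      ∫ z, ψ z.2 * r z ∂P = ∫ y in Icc a₁ b₁, ψ y ∂μ₁ := by
    intro ψ hintψ
    rw [hPdef] at hintψ ⊢
    rw [MeasureTheory.integral_prod_symm _ hintψ]
    refine integral_congr_ae ?_
    filter_upwards [hae₁] with y hy
    rw [integral_const_mul, hslice₀ y hy, mul_one]
  -- nonnegativity of the bounds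
  have hma₀ : a₀ ∈ Icc a₀ b₀ := left_mem_Icc.2 hab₀.le
  have hma₁ : a₁ ∈ Icc a₁ b₁ := left_mem_Icc.2 hab₁.le
  have hmrect : ((a₀, a₁) : ℝ × ℝ) ∈ (Icc a₀ b₀) ×ˢ (Icc a₁ b₁) := ⟨hma₀, hma₁⟩
  -- integrability of all the terms
  have hBnorm : ∀ (w : ℝ) (B : ℝ), ‖w‖ ≤ B → |w| ≤ B := fun w B h => by
    rwa [Real.norm_eq_abs] at h
  have hbmul : ∀ (φ ψ : ℝ × ℝ → ℝ) (Cφ Cψ : ℝ),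
      (∀ z ∈ (Icc a₀ b₀) ×ˢ (Icc a₁ b₁), |φ z| ≤ Cφ) →
      (∀ z ∈ (Icc a₀ b₀) ×ˢ (Icc a₁ b₁), |ψ z| ≤ Cψ) →
      ∀ z ∈ (Icc a₀ b₀) ×ˢ (Icc a₁ b₁), |φ z * ψ z| ≤ Cφ * Cψ := by
    intro φ ψ Cφ Cψ h1 h2 z hz
    rw [abs_mul]
    exact mul_le_mul (h1 z hz) (h2 z hz) (abs_nonneg _) (le_trans (abs_nonneg _) (h1 z hz))
  have hbf : ∀ z ∈ (Icc a₀ b₀) ×ˢ (Icc a₁ b₁), |fe z.1| ≤ Bf := fun z hz =>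
    hBnorm _ _ (hBf z.1 hz.1)
  have hbg : ∀ z ∈ (Icc a₀ b₀) ×ˢ (Icc a₁ b₁), |ge z.2| ≤ Bg := fun z hz =>
    hBnorm _ _ (hBg z.2 hz.2)
  have hbf₀ : ∀ z ∈ (Icc a₀ b₀) ×ˢ (Icc a₁ b₁), |f₀e z.1| ≤ Bf₀ := fun z hz =>
    hBnorm _ _ (hBf₀ z.1 hz.1)
  have hbg₀ : ∀ z ∈ (Icc a₀ b₀) ×ˢ (Icc a₁ b₁), |g₀ z.2| ≤ Bg₀ := fun z hz =>
    hBnorm _ _ (hBg₀ z.2 hz.2)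
  have hbΦ : ∀ z ∈ (Icc a₀ b₀) ×ˢ (Icc a₁ b₁), |Φe z| ≤ BΦ := fun z hz =>
    hBnorm _ _ (hBΦ z hz)
  have hbr : ∀ z ∈ (Icc a₀ b₀) ×ˢ (Icc a₁ b₁), |r z| ≤ (K : ℝ) := fun z _ => by
    rw [abs_of_nonneg (hrnn z)]; exact hrle z
  have hmfe : Measurable fun z : ℝ × ℝ => fe z.1 :=
    (hfelip.continuous.comp continuous_fst).measurable
  have hmge : Measurable fun z : ℝ × ℝ => ge z.2 :=
    (hgelip.continuous.comp continuous_snd).measurable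
  have hmf₀ : Measurable fun z : ℝ × ℝ => f₀e z.1 :=
    (hf₀cont.comp continuous_fst).measurable
  have hmg₀ : Measurable fun z : ℝ × ℝ => g₀ z.2 :=
    (hg₀cont.comp continuous_snd).measurable
  have hiA1 : Integrable (fun z : ℝ × ℝ => fe z.1 * Φe z) P :=
    hInt _ (hmfe.mul hΦcont.measurable) ⟨Bf * BΦ, hbmul _ _ _ _ hbf hbΦ⟩
  have hiA2 : Integrable (fun z : ℝ × ℝ => ge z.2 * Φe z) P :=
    hInt _ (hmge.mul hΦcont.measurable) ⟨Bg * BΦ, hbmul _ _ _ _ hbg hbΦ⟩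
  have hiA3 : Integrable (fun z : ℝ × ℝ => Φe z ^ 2) P := by
    refine hInt _ (hΦcont.measurable.pow_const 2) ⟨BΦ * BΦ, ?_⟩
    have := hbmul _ _ _ _ hbΦ hbΦ
    intro z hz
    rw [sq]
    exact this z hz
  have hiA4 : Integrable (fun z : ℝ × ℝ => f₀e z.1 * Φe z) P :=
    hInt _ (hmf₀.mul hΦcont.measurable) ⟨Bf₀ * BΦ, hbmul _ _ _ _ hbf₀ hbΦ⟩
  have hiA5 : Integrable (fun z : ℝ × ℝ => g₀ z.2 * Φe z) P :=
    hInt _ (hmg₀.mul hΦcont.measurable) ⟨Bg₀ * BΦ, hbmul _ _ _ _ hbg₀ hbΦ⟩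
  have hiB1 : Integrable (fun z : ℝ × ℝ => fe z.1 * r z) P :=
    hInt _ (hmfe.mul hrmeas) ⟨Bf * K, hbmul _ _ _ _ hbf hbr⟩
  have hiB2 : Integrable (fun z : ℝ × ℝ => ge z.2 * r z) P :=
    hInt _ (hmge.mul hrmeas) ⟨Bg * K, hbmul _ _ _ _ hbg hbr⟩
  have hiB3 : Integrable (fun z : ℝ × ℝ => f₀e z.1 * r z) P :=
    hInt _ (hmf₀.mul hrmeas) ⟨Bf₀ * K, hbmul _ _ _ _ hbf₀ hbr⟩
  have hiB4 : Integrable (fun z : ℝ × ℝ => g₀ z.2 * r z) P :=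
    hInt _ (hmg₀.mul hrmeas) ⟨Bg₀ * K, hbmul _ _ _ _ hbg₀ hbr⟩
  have hiB5 : Integrable (fun z : ℝ × ℝ => (1 : ℝ) * r z) P := by
    refine hInt _ (measurable_const.mul hrmeas) ⟨1 * K, ?_⟩
    intro z hz
    have := hbr z hz
    rw [abs_mul, abs_one]
    nlinarith [abs_nonneg (r z)]
  have hiB6 : Integrable (fun z : ℝ × ℝ => r z ^ 2) P := by
    refine hInt _ (hrmeas.pow_const 2) ⟨(K : ℝ) * K, ?_⟩
    intro z hz
    rw [sq, abs_mul]
    exact mul_le_mul (hbr z hz) (hbr z hz) (abs_nonneg _) hKR.le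
  have haerect : ∀ᵐ z ∂P, z ∈ (Icc a₀ b₀) ×ˢ (Icc a₁ b₁) := by
    rw [hPdef, Measure.prod_restrict]
    exact ae_restrict_mem (measurableSet_Icc.prod measurableSet_Icc)
  -- Step U : pointwise and integrated
  have hptU : ∀ z ∈ (Icc a₀ b₀) ×ˢ (Icc a₁ b₁),
      fe z.1 * Φe z + ge z.2 * Φe z + Φe z ^ 2 ≤ f₀e z.1 * Φe z + g₀ z.2 * Φe z := by
    intro z hz
    rcases eq_or_lt_of_le (hΦnn z) with h0 | hpos
    · rw [← h0]; ring_nf; exact le_rfl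
    · have harg : Φe z = z.1 * z.2 - fe z.1 - ge z.2 := by
        rw [hΦdef]
        dsimp only
        rcases le_or_gt (z.1 * z.2 - fe z.1 - ge z.2) 0 with hneg | hp
        · exfalso
          rw [hΦdef] at hpos
          dsimp only at hpos
          rw [max_eq_right hneg] at hpos
          exact lt_irrefl _ hpos
        · rw [max_eq_left hp.le]
      have hxy : z.1 * z.2 ≤ f₀e z.1 + g₀ z.2 := by
        have hcg := conj_ge (f0_contOn hder) (y := z.2) hz.1
        rw [hf₀eq hz.1] at hcg
        rw [hg₀def]
        linarith
      have h1 : Φe z ^ 2 = (z.1 * z.2 - fe z.1 - ge z.2) * Φe z := by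
        rw [sq]
        nth_rewrite 1 [harg]
        rfl
      linarith [h1, mul_nonneg (sub_nonneg.2 hxy) (hΦnn z),
        mul_nonneg (sub_nonneg.2 hxy) (hΦnn z)]
  have hU : ε * ((∫ x in Icc a₀ b₀, f x ∂μ₀) + (∫ y in Icc a₁ b₁, g y ∂μ₁))
      + (∫ z, Φe z ^ 2 ∂P) ≤
      ε * ((∫ x in Icc a₀ b₀, f₀ x ∂μ₀) + (∫ y in Icc a₁ b₁, g₀ y ∂μ₁)) := by
    have hiA12 : Integrable (fun z : ℝ × ℝ => fe z.1 * Φe z + ge z.2 * Φe z) P :=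
      hiA1.add hiA2
    have hiA123 : Integrable (fun z : ℝ × ℝ => fe z.1 * Φe z + ge z.2 * Φe z + Φe z ^ 2) P :=
      hiA12.add hiA3
    have hiA45 : Integrable (fun z : ℝ × ℝ => f₀e z.1 * Φe z + g₀ z.2 * Φe z) P :=
      hiA4.add hiA5
    have hmono : ∫ z, (fe z.1 * Φe z + ge z.2 * Φe z + Φe z ^ 2) ∂P ≤
        ∫ z, (f₀e z.1 * Φe z + g₀ z.2 * Φe z) ∂P := by
      refine integral_mono_ae hiA123 hiA45 ?_
      filter_upwards [haerect] with z hz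
      have := hptU z hz
      linarith
    rw [integral_add hiA12 hiA3, integral_add hiA1 hiA2,
        integral_add hiA4 hiA5] at hmono
    rw [hEX fe hiA1, hEY ge hiA2, hEX f₀e hiA4, hEY g₀ hiA5] at hmono
    have he1 : ∫ x in Icc a₀ b₀, fe x ∂μ₀ = ∫ x in Icc a₀ b₀, f x ∂μ₀ :=
      (setIntegral_congr_fun measurableSet_Icc hfeeq).symm
    have he2 : ∫ y in Icc a₁ b₁, ge y ∂μ₁ = ∫ y in Icc a₁ b₁, g y ∂μ₁ :=
      (setIntegral_congr_fun measurableSet_Icc hgeeq).symm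
    have he3 : ∫ x in Icc a₀ b₀, f₀e x ∂μ₀ = ∫ x in Icc a₀ b₀, f₀ x ∂μ₀ :=
      (setIntegral_congr_fun measurableSet_Icc hf₀eq).symm
    rw [he1, he2, he3] at hmono
    linarith
  -- a.e. interior points in the product
  have haeIoo : ∀ᵐ z ∂P, z.1 ∈ Ioo a₀ b₀ ∧ z.2 ∈ Ioo a₁ b₁ := by
    have hc0 : P {z : ℝ × ℝ | z.1 ∉ Ioo a₀ b₀} = 0 := by
      have hset : {z : ℝ × ℝ | z.1 ∉ Ioo a₀ b₀} = (Ioo a₀ b₀)ᶜ ×ˢ (univ : Set ℝ) := by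
        ext z; simp [mem_prod]
      rw [hPdef, hset, Measure.prod_prod]
      have hz : (μ₀.restrict (Icc a₀ b₀)) (Ioo a₀ b₀)ᶜ = 0 := by
        rw [Measure.restrict_apply measurableSet_Ioo.compl]
        refine measure_mono_null ?_ (measure_union_null (gm_atom hμ₀ a₀) (gm_atom hμ₀ b₀))
        rintro w ⟨hw1, hw2⟩
        simp only [mem_compl_iff, mem_Ioo, not_and_or, not_lt] at hw1
        simp only [union_singleton, mem_insert_iff, mem_singleton_iff]
        rcases hw1 with h | h
        · right; exact le_antisymm h hw2.1
        · left; exact le_antisymm hw2.2 h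
      rw [hz, zero_mul]
    have hc1 : P {z : ℝ × ℝ | z.2 ∉ Ioo a₁ b₁} = 0 := by
      have hset : {z : ℝ × ℝ | z.2 ∉ Ioo a₁ b₁} = (univ : Set ℝ) ×ˢ (Ioo a₁ b₁)ᶜ := by
        ext z; simp [mem_prod]
      rw [hPdef, hset, Measure.prod_prod]
      have hz : (μ₁.restrict (Icc a₁ b₁)) (Ioo a₁ b₁)ᶜ = 0 := by
        rw [Measure.restrict_apply measurableSet_Ioo.compl]
        refine measure_mono_null ?_ (measure_union_null (gm_atom hμ₁ a₁) (gm_atom hμ₁ b₁))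
        rintro w ⟨hw1, hw2⟩
        simp only [mem_compl_iff, mem_Ioo, not_and_or, not_lt] at hw1
        simp only [union_singleton, mem_insert_iff, mem_singleton_iff]
        rcases hw1 with h | h
        · right; exact le_antisymm h hw2.1
        · left; exact le_antisymm hw2.2 h
      rw [hz, mul_zero]
    filter_upwards [measure_eq_zero_iff_ae_notMem.1 hc0, measure_eq_zero_iff_ae_notMem.1 hc1] with z h1 h2
    simp only [mem_setOf_eq, not_not] at h1 h2
    exact ⟨h1, h2⟩
  -- Step L : pointwise
  have hptL : ∀ᵐ z ∂P, f₀e z.1 * r z + g₀ z.2 * r z ≤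
      fe z.1 * r z + ge z.2 * r z + (1/(2*ε)) * Φe z ^ 2 + (ε/2) * r z ^ 2
        + (Lam/lam^3) * (1/(K:ℝ))^2 * r z := by
    filter_upwards [haeIoo] with z hz
    obtain ⟨hz1, hz2⟩ := hz
    have hz1I : z.1 ∈ Icc a₀ b₀ := Ioo_subset_Icc_self hz1
    have hz2I : z.2 ∈ Icc a₁ b₁ := Ioo_subset_Icc_self hz2
    have hle : z.1 * z.2 - fe z.1 - ge z.2 ≤ Φe z := by
      rw [hΦdef]; exact le_max_left _ _
    have heq2 : (1/(2*ε)) * Φe z ^ 2 + (ε/2) * r z ^ 2 - Φe z * r z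
        = (Φe z - ε * r z)^2 / (2*ε) := by field_simp; ring
    have hquadnn : (0:ℝ) ≤ (Φe z - ε * r z)^2 / (2*ε) := by positivity
    rcases eq_or_ne (r z) 0 with hr0 | hrne
    · rw [hr0]
      ring_nf
      positivity
    · have hcond : ⌈(K:ℝ) * cdf μ₀ z.1⌉ = ⌈(K:ℝ) * cdf μ₁ z.2⌉ := by
        by_contra hcc
        rw [hrdef] at hrne
        dsimp only at hrne
        rw [if_neg hcc] at hrne
        exact hrne rfl
      have hcdf : |cdf μ₀ z.1 - cdf μ₁ z.2| ≤ 1/(K:ℝ) := by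
        have h1 := Int.le_ceil ((K:ℝ) * cdf μ₀ z.1)
        have h2 := Int.ceil_lt_add_one ((K:ℝ) * cdf μ₀ z.1)
        have h3 := Int.le_ceil ((K:ℝ) * cdf μ₁ z.2)
        have h4 := Int.ceil_lt_add_one ((K:ℝ) * cdf μ₁ z.2)
        rw [hcond] at h1 h2
        rw [abs_le]
        constructor
        · have h5 := (le_div_iff₀ hKR).2 (show (cdf μ₁ z.2 - cdf μ₀ z.1) * K ≤ 1 by nlinarith)
          linarith
        · exact (le_div_iff₀ hKR).2 (by nlinarith)
      have hq := key_quad hμ₀ hμ₁ monge hab₀ hab₁ hlam hL.le hcv hder hz1 hz2 hcdf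
      have hp3 : (0:ℝ) < lam^3 := by positivity
      have hquad : f₀e z.1 + g₀ z.2 - z.1 * z.2 ≤ (Lam/lam^3) * (1/(K:ℝ))^2 := by
        rw [← hf₀eq hz1I, hg₀def, div_mul_eq_mul_div, le_div_iff₀ hp3]
        nlinarith [hq]
      have hmul1 := mul_le_mul_of_nonneg_right hquad (hrnn z)
      have hmul2 := mul_le_mul_of_nonneg_right hle (hrnn z)
      nlinarith [hquadnn, heq2, hmul1, hmul2]
  -- r integrates to 1
  have hIcc1 : μ₀ (Icc a₀ b₀) = 1 := by
    have h := measure_add_measure_compl (μ := μ₀) (s := Icc a₀ b₀) measurableSet_Icc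
    rw [gm_compl hμ₀, add_zero, measure_univ] at h
    exact h
  have hr1 : ∫ z, r z ∂P = 1 := by
    have hfun : ∫ z, r z ∂P = ∫ z, (1:ℝ) * r z ∂P := by simp
    rw [hfun, hMX (fun _ => (1:ℝ)) hiB5, setIntegral_const, measureReal_def, hIcc1]
    simp
  -- Step L : integrated
  have hLied : (∫ x in Icc a₀ b₀, f₀ x ∂μ₀) + (∫ y in Icc a₁ b₁, g₀ y ∂μ₁) ≤
      (∫ x in Icc a₀ b₀, f x ∂μ₀) + (∫ y in Icc a₁ b₁, g y ∂μ₁)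
      + (1/(2*ε)) * (∫ z, Φe z ^ 2 ∂P) + (ε/2) * (K:ℝ)
      + (Lam/lam^3) * (1/(K:ℝ))^2 := by
    have hiB0 : Integrable r P := by simpa using hiB5
    have hiL : Integrable (fun z : ℝ × ℝ => f₀e z.1 * r z + g₀ z.2 * r z) P := hiB3.add hiB4
    have hiR1 : Integrable (fun z : ℝ × ℝ => fe z.1 * r z + ge z.2 * r z) P := hiB1.add hiB2
    have hiR2 : Integrable (fun z : ℝ × ℝ => fe z.1 * r z + ge z.2 * r z
        + (1/(2*ε)) * Φe z ^ 2) P := hiR1.add (hiA3.const_mul _)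
    have hiR3 : Integrable (fun z : ℝ × ℝ => fe z.1 * r z + ge z.2 * r z
        + (1/(2*ε)) * Φe z ^ 2 + (ε/2) * r z ^ 2) P := hiR2.add (hiB6.const_mul _)
    have hiR4 : Integrable (fun z : ℝ × ℝ => fe z.1 * r z + ge z.2 * r z
        + (1/(2*ε)) * Φe z ^ 2 + (ε/2) * r z ^ 2
        + (Lam/lam^3) * (1/(K:ℝ))^2 * r z) P := hiR3.add (hiB0.const_mul _)
    have hm := integral_mono_ae hiL hiR4 hptL
    rw [integral_add hiR3 (hiB0.const_mul _), integral_add hiR2 (hiB6.const_mul _),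
        integral_add hiR1 (hiA3.const_mul _), integral_add hiB1 hiB2,
        integral_add hiB3 hiB4] at hm
    rw [hMX fe hiB1, hMY ge hiB2, hMX f₀e hiB3, hMY g₀ hiB4] at hm
    rw [integral_const_mul, integral_const_mul, integral_const_mul] at hm
    have hrsq' : ∫ z, r z ^ 2 ∂P = (K:ℝ) := by
      have : (fun z : ℝ × ℝ => r z ^ 2) = fun z => (K:ℝ) * r z := funext hrsq
      rw [this, integral_const_mul, hr1, mul_one]
    rw [hrsq', hr1, mul_one] at hm
    have he1 : ∫ x in Icc a₀ b₀, fe x ∂μ₀ = ∫ x in Icc a₀ b₀, f x ∂μ₀ :=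
      (setIntegral_congr_fun measurableSet_Icc hfeeq).symm
    have he2 : ∫ y in Icc a₁ b₁, ge y ∂μ₁ = ∫ y in Icc a₁ b₁, g y ∂μ₁ :=
      (setIntegral_congr_fun measurableSet_Icc hgeeq).symm
    have he3 : ∫ x in Icc a₀ b₀, f₀e x ∂μ₀ = ∫ x in Icc a₀ b₀, f₀ x ∂μ₀ :=
      (setIntegral_congr_fun measurableSet_Icc hf₀eq).symm
    rw [he1, he2, he3] at hm
    linarith
  -- numeric facts about K and ε
  have h13pos : (0:ℝ) < ε ^ ((1:ℝ)/3) := Real.rpow_pos_of_pos hε _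
  have hKge : ε ^ (-(1:ℝ)/3) ≤ (K:ℝ) := Nat.le_ceil _
  have hKlt : (K:ℝ) < ε ^ (-(1:ℝ)/3) + 1 :=
    Nat.ceil_lt_add_one (le_of_lt (Real.rpow_pos_of_pos hε _))
  have hneg : ε ^ (-(1:ℝ)/3) = (ε ^ ((1:ℝ)/3))⁻¹ := by
    rw [show (-(1:ℝ)/3) = -((1:ℝ)/3) by norm_num, Real.rpow_neg hε.le]
  have hm13 : (1:ℝ)/(K:ℝ) ≤ ε ^ ((1:ℝ)/3) := by
    rw [div_le_iff₀ hKR]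
    have h2 := mul_le_mul_of_nonneg_left hKge h13pos.le
    rw [hneg, mul_inv_cancel₀ h13pos.ne'] at h2
    linarith
  have hm23 : ((1:ℝ)/(K:ℝ))^2 ≤ ε ^ ((2:ℝ)/3) := by
    have h1 : ((1:ℝ)/(K:ℝ))^2 ≤ (ε ^ ((1:ℝ)/3))^2 := by
      have := pow_le_pow_left₀ (by positivity : (0:ℝ) ≤ 1/(K:ℝ)) hm13 2
      exact this
    have h2 : (ε ^ ((1:ℝ)/3))^2 = ε ^ ((2:ℝ)/3) := by
      rw [← Real.rpow_natCast (ε ^ ((1:ℝ)/3)) 2, ← Real.rpow_mul hε.le]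
      norm_num
    linarith
  have hεK : ε * (K:ℝ) ≤ ε ^ ((2:ℝ)/3) + ε := by
    have h1 : ε * (K:ℝ) < ε * (ε ^ (-(1:ℝ)/3) + 1) :=
      mul_lt_mul_of_pos_left hKlt hε
    have h2 : ε * ε ^ (-(1:ℝ)/3) = ε ^ ((2:ℝ)/3) := by
      nth_rewrite 1 [show ε = ε ^ ((1:ℝ)) from (Real.rpow_one ε).symm]
      rw [← Real.rpow_add hε]
      norm_num
    nlinarith
  have hεle : ε ≤ ε ^ ((2:ℝ)/3) := by
    have := Real.rpow_le_rpow_of_exponent_ge hε hε1.le (show (2:ℝ)/3 ≤ 1 by norm_num)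
    rwa [Real.rpow_one] at this
  -- conclusion
  have hQnn : (0:ℝ) ≤ ∫ z, Φe z ^ 2 ∂P := integral_nonneg fun z => sq_nonneg _
  have hIfle : (∫ x in Icc a₀ b₀, f x ∂μ₀) ≤ ∫ x in Icc a₀ b₀, f₀ x ∂μ₀ := by
    nlinarith [hU, hQnn, hnormf, hnormf₀]
  have hQle : (∫ z, Φe z ^ 2 ∂P) ≤ 2 * ε * ((∫ x in Icc a₀ b₀, f₀ x ∂μ₀)
      - (∫ x in Icc a₀ b₀, f x ∂μ₀)) := by
    nlinarith [hU]
  have hfrac : (1/(2*ε)) * (∫ z, Φe z ^ 2 ∂P) ≤ (∫ x in Icc a₀ b₀, f₀ x ∂μ₀)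
      - (∫ x in Icc a₀ b₀, f x ∂μ₀) := by
    have hpos : (0:ℝ) < 1/(2*ε) := by positivity
    have h2 := mul_le_mul_of_nonneg_left hQle hpos.le
    have h3 : (1/(2*ε)) * (2 * ε * ((∫ x in Icc a₀ b₀, f₀ x ∂μ₀)
        - (∫ x in Icc a₀ b₀, f x ∂μ₀))) = (∫ x in Icc a₀ b₀, f₀ x ∂μ₀)
        - (∫ x in Icc a₀ b₀, f x ∂μ₀) := by
      field_simp
    linarith
  have hgap : (∫ x in Icc a₀ b₀, f₀ x ∂μ₀) - (∫ x in Icc a₀ b₀, f x ∂μ₀) ≤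
      (ε/2) * (K:ℝ) + (Lam/lam^3) * (1/(K:ℝ))^2 := by
    linarith [hLied, hfrac, hnormf, hnormf₀]
  have hC1 : (0:ℝ) ≤ Lam/lam^3 := by positivity
  have hfinal : (∫ x in Icc a₀ b₀, f₀ x ∂μ₀) - (∫ x in Icc a₀ b₀, f x ∂μ₀) ≤
      (Lam/lam^3 + 1) * ε ^ ((2:ℝ)/3) := by
    have h1 : (Lam/lam^3) * (1/(K:ℝ))^2 ≤ (Lam/lam^3) * ε ^ ((2:ℝ)/3) :=
      mul_le_mul_of_nonneg_left hm23 hC1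
    nlinarith [hgap, hεK, hεle]
  -- integrability of f and f₀ on the interval
  have hIfint : Integrable f (μ₀.restrict (Icc a₀ b₀)) := by
    have h1 : IntegrableOn fe (Icc a₀ b₀) μ₀ :=
      hfelip.continuous.continuousOn.integrableOn_compact isCompact_Icc
    refine h1.congr ?_
    filter_upwards [ae_restrict_mem measurableSet_Icc] with x hx
    exact (hfeeq hx).symm
  have hIf₀int : Integrable f₀ (μ₀.restrict (Icc a₀ b₀)) := by
    have h1 : IntegrableOn f₀e (Icc a₀ b₀) μ₀ :=
      hf₀cont.continuousOn.integrableOn_compact isCompact_Icc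
    refine h1.congr ?_
    filter_upwards [ae_restrict_mem measurableSet_Icc] with x hx
    exact (hf₀eq hx).symm
  rw [integral_sub hIfint hIf₀int]
  rw [abs_of_nonpos (by linarith)]
  linarith
end
end
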